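/- arXiv:2109.04826 — 6 statements merged into one kernel-verified Lean document; each statement's English description precedes it below -/
import Mathlib

section
/- Let G be a graph of order n and suppose {u,v} is a 2-element vertex set that forms an odd pair with some 2-element set Y disjoint from it. Then there exist at least n − 3 odd pairs of G whose first component is X = {u,v}. -/
open SimpleGraph Finset
open scoped Classical

variable {V : Type*}

/-- The Seidel matrix of a graph: zero diagonal, `-1` for adjacent pairs, `+1` otherwise. -/
noncomputable def seidelMatrix (G : SimpleGraph V) : Matrix V V ℝ :=
  fun i j => if i = j then 0 else if G.Adj i j then -1 else 1

theorem seidelMatrix_isHermitian (G : SimpleGraph V) : (seidelMatrix G).IsHermitian := by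
  unfold Matrix.IsHermitian
  ext i j
  by_cases h : i = j
  · subst h; simp [seidelMatrix]
  · simp [seidelMatrix, Matrix.conjTranspose_apply, h, Ne.symm h, G.adj_comm j i]

/-- The Seidel energy: sum of absolute values of the eigenvalues of the Seidel matrix. -/
noncomputable def seidelEnergy [Fintype V] (G : SimpleGraph V) : ℝ :=
  ∑ i, |(seidelMatrix_isHermitian G).eigenvalues i|

/-- Number of edges with one endpoint in `X` and the other in `Y` (for disjoint `X Y`). -/
noncomputable def edgeCount (G : SimpleGraph V) (X Y : Finset V) : ℕ :=
  ∑ x ∈ X, ∑ y ∈ Y, if G.Adj x y then 1 else 0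

/-- `(X, Y)` is an odd pair: disjoint 2-element sets with an odd number of edges between them. -/
def IsOddPair (G : SimpleGraph V) (X Y : Finset V) : Prop :=
  X.card = 2 ∧ Y.card = 2 ∧ Disjoint X Y ∧ Odd (edgeCount G X Y)

/-- `X` is an odd set: a 2-element set which is the first component of some odd pair. -/
def IsOddSet (G : SimpleGraph V) (X : Finset V) : Prop :=
  X.card = 2 ∧ ∃ Y : Finset V, Y.card = 2 ∧ Disjoint X Y ∧ Odd (edgeCount G X Y)

/-- The graph `Λ(G)` whose edges are the odd sets of `G`. -/
def lambdaGraph (G : SimpleGraph V) : SimpleGraph V where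
  Adj u v := u ≠ v ∧ IsOddSet G {u, v}
  symm := by
    constructor
    rintro u v ⟨h1, h2⟩
    exact ⟨h1.symm, by rwa [Finset.pair_comm]⟩
  loopless := by constructor; rintro u ⟨h1, -⟩; exact h1 rfl

/-- Seidel switching of `G` with respect to the partition `(S, Sᶜ)`. -/
def seidelSwitch (G : SimpleGraph V) (S : Set V) : SimpleGraph V where
  Adj u v := u ≠ v ∧ (G.Adj u v ↔ ((u ∈ S) ↔ (v ∈ S)))
  symm := by
    constructor
    rintro u v ⟨h1, h2⟩
    refine ⟨h1.symm, ?_⟩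
    rw [G.adj_comm]
    tauto
  loopless := by constructor; rintro u ⟨h1, -⟩; exact h1 rfl

/-- The degree of a vertex. -/
noncomputable def degree' (G : SimpleGraph V) (v : V) : ℕ := Nat.card {x : V // G.Adj v x}

/-- `D(G)`: the maximum number of leaves adjacent to a single vertex. -/
noncomputable def maxLeafCount [Fintype V] (G : SimpleGraph V) : ℕ :=
  Finset.univ.sup fun w => Nat.card {u : V // G.Adj w u ∧ degree' G u = 1}

/-- The number of odd pairs of `G`. -/
noncomputable def numOddPairs [Fintype V] (G : SimpleGraph V) : ℕ :=
  Nat.card {p : Finset V × Finset V // IsOddPair G p.1 p.2}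

/-- The number of odd sets of `G`. -/
noncomputable def numOddSets [Fintype V] (G : SimpleGraph V) : ℕ :=
  Nat.card {X : Finset V // IsOddSet G X}

/-- `G` is a star: some center vertex lies on every edge. -/
def IsStar (G : SimpleGraph V) : Prop := ∃ c : V, ∀ u v : V, G.Adj u v → u = c ∨ v = c

set_option maxHeartbeats 1000000 in
/-- if `{u,v}` is the first component of some odd pair, then it is the first
component of at least `n - 3` odd pairs. -/
theorem oddPairs_with_fixed_first_component [Fintype V] (G : SimpleGraph V) (u v : V)
    (hne : u ≠ v) (h : ∃ Y : Finset V, IsOddPair G {u, v} Y) :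
    Fintype.card V - 3 ≤ Nat.card {Y : Finset V // IsOddPair G ({u, v} : Finset V) Y} := by
  classical
  obtain ⟨Y, hX2, hY2, hdisj, hodd⟩ := h
  obtain ⟨a, b, hab, rfl⟩ := Finset.card_eq_two.mp hY2
  have hu : u ∉ ({a, b} : Finset V) := Finset.disjoint_left.mp hdisj (by simp)
  have hv : v ∉ ({a, b} : Finset V) := Finset.disjoint_left.mp hdisj (by simp)
  simp only [Finset.mem_insert, Finset.mem_singleton, not_or] at hu hv
  obtain ⟨hua, hub⟩ := hu
  obtain ⟨hva, hvb⟩ := hv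
  -- parity criterion
  have key : ∀ w z : V, w ≠ z → (Odd (edgeCount G {u, v} {w, z}) ↔
      ((G.Adj u w ↔ G.Adj v w) ↔ ¬(G.Adj u z ↔ G.Adj v z))) := by
    intro w z hwz
    unfold edgeCount
    rw [Finset.sum_pair hne, Finset.sum_pair hwz, Finset.sum_pair hwz]
    by_cases h1 : G.Adj u w <;> by_cases h2 : G.Adj u z <;> by_cases h3 : G.Adj v w <;>
      by_cases h4 : G.Adj v z <;> simp [h1, h2, h3, h4, Nat.odd_iff] <;> tauto
  set Q : V → Prop := fun w => (G.Adj u w ↔ G.Adj v w) with hQdef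
  have hQab : Q a ↔ ¬ Q b := (key a b hab).mp hodd
  -- the injection
  set g : V → Finset V := fun w => if Q w ↔ Q a then {w, b} else {w, a} with hgdef
  set S : Finset (Finset V) :=
    Finset.univ.filter (fun Z => IsOddPair G ({u, v} : Finset V) Z) with hSdef
  set W : Finset V := Finset.univ \ {u, v, a} with hWdef
  have hbne : ∀ w : V, (Q w ↔ Q a) → w ≠ b := by
    rintro w hQw rfl; tauto
  have hmaps : ∀ w ∈ W, g w ∈ S := by
    intro w hw
    simp only [hWdef, Finset.mem_sdiff, Finset.mem_insert, Finset.mem_singleton, not_or] at hw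
    obtain ⟨-, hwu, hwv, hwa⟩ := hw
    simp only [hSdef, Finset.mem_filter, Finset.mem_univ, true_and]
    by_cases hQw : Q w ↔ Q a
    · have hwb := hbne w hQw
      have : g w = {w, b} := if_pos hQw
      rw [this]
      refine ⟨Finset.card_pair hne, Finset.card_pair hwb, ?_, ?_⟩
      · simp only [Finset.disjoint_left, Finset.mem_insert, Finset.mem_singleton]
        rintro x (rfl | rfl) <;> rintro (rfl | rfl) <;> simp_all
      · exact (key w b hwb).mpr (hQw.trans hQab)
    · have : g w = {w, a} := if_neg hQw
      rw [this]
      refine ⟨Finset.card_pair hne, Finset.card_pair hwa, ?_, ?_⟩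
      · simp only [Finset.disjoint_left, Finset.mem_insert, Finset.mem_singleton]
        rintro x (rfl | rfl) <;> rintro (rfl | rfl) <;> simp_all
      · exact (key w a hwa).mpr (by
          constructor
          · intro h1 h2; exact hQw ⟨fun _ => h2, fun _ => h1⟩
          · intro h1
            by_contra h2
            rcases Classical.em (Q a) with h3 | h3
            · exact h1 h3
            · exact hQw ⟨fun h4 => absurd h4 h2, fun h4 => absurd h4 h3⟩)
  have hinj : Set.InjOn g W := by
    intro w hw w' hw' heq
    simp only [hWdef, Finset.coe_sdiff, Set.mem_diff, Finset.coe_insert, Set.mem_insert_iff,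
      Finset.coe_singleton, Set.mem_singleton_iff, not_or] at hw hw'
    obtain ⟨-, -, -, hwa⟩ := hw
    obtain ⟨-, -, -, hwa'⟩ := hw'
    by_cases hQw : Q w ↔ Q a <;> by_cases hQw' : Q w' ↔ Q a
    · have hwb' := hbne w' hQw'
      rw [hgdef] at heq; simp only [if_pos hQw, if_pos hQw'] at heq
      have h1 : w' ∈ ({w, b} : Finset V) := by rw [heq]; simp
      simp only [Finset.mem_insert, Finset.mem_singleton] at h1
      rcases h1 with h' | h'
      · exact h'.symm
      · exact absurd h' hwb'
    · rw [hgdef] at heq; simp only [if_pos hQw, if_neg hQw'] at heq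
      have h1 : w' ∈ ({w, b} : Finset V) := by rw [heq]; simp
      have h2 : w ∈ ({w', a} : Finset V) := by rw [← heq]; simp
      simp only [Finset.mem_insert, Finset.mem_singleton] at h1 h2
      rcases h1 with h' | h'
      · exact h'.symm
      · rcases h2 with h'' | h''
        · rw [h''] at hQw; exact absurd hQw hQw'
        · exact absurd h'' hwa
    · rw [hgdef] at heq; simp only [if_neg hQw, if_pos hQw'] at heq
      have h1 : w' ∈ ({w, a} : Finset V) := by rw [heq]; simp
      simp only [Finset.mem_insert, Finset.mem_singleton] at h1
      rcases h1 with h' | h'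
      · exact h'.symm
      · exact absurd h' hwa'
    · rw [hgdef] at heq; simp only [if_neg hQw, if_neg hQw'] at heq
      have h1 : w' ∈ ({w, a} : Finset V) := by rw [heq]; simp
      simp only [Finset.mem_insert, Finset.mem_singleton] at h1
      rcases h1 with h' | h'
      · exact h'.symm
      · exact absurd h' hwa'
  have hcard1 : W.card ≤ S.card := Finset.card_le_card_of_injOn g hmaps hinj
  have hcard2 : Fintype.card V - 3 ≤ W.card := by
    rw [hWdef, Finset.card_sdiff_of_subset (Finset.subset_univ _), Finset.card_univ]
    have h1 : ({u, v, a} : Finset V).card ≤ ({v, a} : Finset V).card + 1 :=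
      Finset.card_insert_le _ _
    have h2 : ({v, a} : Finset V).card ≤ ({a} : Finset V).card + 1 :=
      Finset.card_insert_le _ _
    simp only [Finset.card_singleton] at h2
    omega
  have hnat : Nat.card {Y : Finset V // IsOddPair G ({u, v} : Finset V) Y} = S.card := by
    rw [Nat.card_eq_fintype_card, hSdef]
    exact Fintype.card_subtype _
  omega
end

section
/- Let T be a tree of order n ≥ 4 and let u, v be distinct vertices at distance d ≥ 4 in T. Then {u,v} is an odd set of T, i.e., uv is an edge of Λ(T). -/
open SimpleGraph Finset
open scoped Classical

variable {V : Type*}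

private lemma walk_length_drop {G : SimpleGraph V} {u v : V} (p : G.Walk u v) (n : ℕ) :
    (p.drop n).length = p.length - n := by
  induction p generalizing n with
  | nil => simp [SimpleGraph.Walk.drop]
  | cons h q ih =>
    cases n with
    | zero => simp [SimpleGraph.Walk.drop]
    | succ n => simp [SimpleGraph.Walk.drop, ih]

/-- in a tree of order at least 4, vertices at distance at least 4 form an
odd set. -/
theorem oddSet_of_dist_ge_four [Fintype V] (T : SimpleGraph V) (hT : T.IsTree)
    (hn : 4 ≤ Fintype.card V) (u v : V) (hd : 4 ≤ T.dist u v) :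
    IsOddSet T {u, v} := by
  classical
  obtain ⟨p, hp⟩ := SimpleGraph.exists_walk_of_dist_ne_zero (by omega : T.dist u v ≠ 0)
  obtain ⟨d, hd'⟩ : ∃ d, d = T.dist u v := ⟨_, rfl⟩
  rw [← hd'] at hd
  have hconn := hT.isConnected
  obtain ⟨p1, hp1⟩ : ∃ x, x = p.getVert 1 := ⟨_, rfl⟩
  obtain ⟨p2, hp2⟩ : ∃ x, x = p.getVert 2 := ⟨_, rfl⟩
  have hlen : p.length = d := by rw [hp, hd']
  have ha1 : T.Adj u p1 := by
    have := p.adj_getVert_succ (i := 0) (by omega)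
    rw [hp1]
    simpa [p.getVert_zero] using this
  have ha2 : T.Adj p1 p2 := by
    rw [hp1, hp2]
    exact p.adj_getVert_succ (i := 1) (by omega)
  have hd_u_p1 : T.dist u p1 = 1 := SimpleGraph.dist_eq_one_iff_adj.mpr ha1
  have hd_p1_p2 : T.dist p1 p2 = 1 := SimpleGraph.dist_eq_one_iff_adj.mpr ha2
  have hd_u_p2 : T.dist u p2 ≤ 2 := by
    have := hconn.dist_triangle (u := u) (v := p1) (w := p2)
    omega
  have hd_p2_v : T.dist p2 v ≤ d - 2 := by
    have h1 : T.dist p2 v ≤ (p.drop 2).length := by rw [hp2]; exact SimpleGraph.dist_le _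
    have h2 := walk_length_drop p 2
    omega
  have htri2 : d ≤ T.dist u p2 + T.dist p2 v := by
    rw [hd']; exact hconn.dist_triangle
  have huv : u ≠ v := by
    intro h
    rw [h, SimpleGraph.dist_self] at hd'
    omega
  have hup1 : u ≠ p1 := ha1.ne
  have hup2 : u ≠ p2 := by
    rintro h
    rw [h] at hd'
    omega
  have hvp1 : v ≠ p1 := by
    rintro h
    rw [← h] at hd_u_p1
    omega
  have hvp2 : v ≠ p2 := by
    rintro h
    rw [← h] at hd_u_p2
    omega
  have hp12 : p1 ≠ p2 := ha2.ne
  have hnavp1 : ¬ T.Adj v p1 := by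
    intro h
    have h1 : T.dist p1 v = 1 := SimpleGraph.dist_eq_one_iff_adj.mpr h.symm
    have := hconn.dist_triangle (u := u) (v := p1) (w := v)
    omega
  have hnavp2 : ¬ T.Adj v p2 := by
    intro h
    have h1 : T.dist p2 v = 1 := SimpleGraph.dist_eq_one_iff_adj.mpr h.symm
    omega
  have hnaup2 : ¬ T.Adj u p2 := by
    intro h
    have h1 : T.dist u p2 = 1 := SimpleGraph.dist_eq_one_iff_adj.mpr h
    omega
  refine ⟨Finset.card_pair huv, {p1, p2}, Finset.card_pair hp12, ?_, ?_⟩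
  · rw [Finset.disjoint_left]
    intro a ha hb
    simp only [Finset.mem_insert, Finset.mem_singleton] at ha hb
    rcases ha with rfl | rfl <;> rcases hb with h | h <;>
      first | exact hup1 h | exact hup2 h | exact hvp1 h | exact hvp2 h
  · have : edgeCount T {u, v} {p1, p2} = 1 := by
      unfold edgeCount
      rw [Finset.sum_pair huv, Finset.sum_pair hp12, Finset.sum_pair hp12]
      simp [ha1, hnaup2, hnavp1, hnavp2]
    rw [this]
    exact odd_one
end

section
/- Let T be a tree of order n ≥ 4 and let u, v be distinct vertices with distance exactly 2 in T such that {u,v} is not an odd set of T. Then u and v are both leaves of T adjacent to their (unique) common neighbor. -/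
open SimpleGraph Finset
open scoped Classical

variable {V : Type*}

lemma neighbor_unique [Fintype V] (T : SimpleGraph V) (hT : T.IsTree) {u v w : V}
    (huw : T.Adj u w) (hwv : T.Adj w v) (huv : ¬ T.Adj u v) (hne : u ≠ v)
    (h : ¬ IsOddSet T {u, v}) : ∀ x, T.Adj u x → x = w := by
  intro x hux
  by_contra hxw
  have hxv : x ≠ v := by rintro rfl; exact huv hux
  by_cases hvx : T.Adj v x
  · -- two distinct paths u→v, contradiction with tree
    have hp1 : (Walk.cons huw (Walk.cons hwv Walk.nil)).IsPath := by
      simp [Walk.isPath_def, huw.ne, hne, hwv.ne]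
    have hp2 : (Walk.cons hux (Walk.cons hvx.symm Walk.nil)).IsPath := by
      simp [Walk.isPath_def, hux.ne, hne, hxv]
    have heq := (hT.existsUnique_path u v).unique hp1 hp2
    have hw : w ∈ (Walk.cons hux (Walk.cons hvx.symm Walk.nil)).support := by
      rw [← heq]; simp
    simp [huw.ne', Ne.symm hxw, hwv.ne] at hw
  · apply h
    refine ⟨Finset.card_pair hne, {w, x}, Finset.card_pair (Ne.symm hxw), ?_, ?_⟩
    · rw [Finset.disjoint_left]
      intro a ha hb
      simp only [Finset.mem_insert, Finset.mem_singleton] at ha hb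
      rcases ha with rfl | rfl <;> rcases hb with rfl | rfl
      · exact huw.ne rfl
      · exact hux.ne rfl
      · exact hwv.ne' rfl
      · exact hxv rfl
    · have : edgeCount T {u, v} {w, x} = 3 := by
        unfold edgeCount
        rw [Finset.sum_pair hne, Finset.sum_pair (Ne.symm hxw),
          Finset.sum_pair (Ne.symm hxw)]
        simp [huw, hux, hwv.symm, hvx]
      rw [this]; exact ⟨1, rfl⟩

/-- in a tree of order at least 4, if `u, v` at distance 2 do not form an odd
set, then both are leaves sharing their common neighbor. -/
theorem dist_two_not_oddSet [Fintype V] (T : SimpleGraph V) (hT : T.IsTree)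
    (hn : 4 ≤ Fintype.card V) (u v : V) (hd : T.dist u v = 2)
    (h : ¬ IsOddSet T {u, v}) :
    degree' T u = 1 ∧ degree' T v = 1 ∧ ∃ w, T.Adj u w ∧ T.Adj v w := by

  obtain ⟨p, hp⟩ := hT.isConnected.exists_walk_length_eq_dist u v
  rw [hd] at hp
  have hne : u ≠ v := by
    rintro rfl; simp [SimpleGraph.dist_self] at hd
  have huv : ¬ T.Adj u v := fun ha => by
    rw [← SimpleGraph.dist_eq_one_iff_adj] at ha; omega
  obtain ⟨w, huw, hwv⟩ : ∃ w, T.Adj u w ∧ T.Adj w v := by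
    cases p with
    | nil => simp at hp
    | cons h q =>
      cases q with
      | nil => simp at hp
      | cons h' q' =>
        cases q' with
        | nil => exact ⟨_, h, h'⟩
        | cons h'' q'' => simp [Walk.length_cons] at hp
  have keyu := neighbor_unique T hT huw hwv huv hne h
  have h' : ¬ IsOddSet T {v, u} := by rwa [Finset.pair_comm]
  have keyv := neighbor_unique T hT hwv.symm huw.symm (fun ha => huv ha.symm) hne.symm h'
  refine ⟨?_, ?_, w, huw, hwv.symm⟩
  · unfold degree'
    rw [Nat.card_eq_one_iff_unique]
    exact ⟨⟨fun a b => Subtype.ext ((keyu a.1 a.2).trans (keyu b.1 b.2).symm)⟩, ⟨⟨w, huw⟩⟩⟩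
  · unfold degree'
    rw [Nat.card_eq_one_iff_unique]
    exact ⟨⟨fun a b => Subtype.ext ((keyv a.1 a.2).trans (keyv b.1 b.2).symm)⟩, ⟨⟨w, hwv.symm⟩⟩⟩
end

section
/- Let T be a tree of order n ≥ 4, and let u,v be distinct vertices with {u,v} not an odd set of T. Then exactly one of the following holds: (1) u and v are leaves with a common neighbor; (2) u and v are adjacent and every other vertex of T is a leaf adjacent to u or to v (a double star); (3) u and v are at distance 3 and every vertex of T outside the u–v path is a leaf adjacent to u or to v. -/
open SimpleGraph Finset
open scoped Classical

variable {V : Type*}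

/-- Case 1: `u` and `v` are leaves with a common neighbor. -/
def CaseLeaves (T : SimpleGraph V) (u v : V) : Prop :=
  degree' T u = 1 ∧ degree' T v = 1 ∧ ∃ w, T.Adj u w ∧ T.Adj v w

/-- Case 2: `u` and `v` are adjacent and every other vertex is a leaf adjacent to `u` or `v`
(a double star). -/
def CaseDoubleStar (T : SimpleGraph V) (u v : V) : Prop :=
  T.Adj u v ∧ ∀ x, x ≠ u → x ≠ v → degree' T x = 1 ∧ (T.Adj x u ∨ T.Adj x v)

/-- Case 3: `u` and `v` are at distance 3 and every vertex outside the `u`–`v` path is a leaf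
adjacent to `u` or `v`. -/
def CaseDistThree (T : SimpleGraph V) (u v : V) : Prop :=
  T.dist u v = 3 ∧ ∃ p q : V, T.Adj u p ∧ T.Adj p q ∧ T.Adj q v ∧
    ∀ x, x ∉ ({u, p, q, v} : Set V) → degree' T x = 1 ∧ (T.Adj x u ∨ T.Adj x v)


section TreeHelpers
variable {T : SimpleGraph V}

lemma no_two_paths {G : SimpleGraph V} (hac : G.IsAcyclic) {a b : V}
    {p q : G.Walk a b} (hp : p.IsPath) (hq : q.IsPath) (hne : p ≠ q) : False :=
  hne (congrArg Subtype.val (hac.path_unique ⟨p, hp⟩ ⟨q, hq⟩))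

lemma no_triangle {G : SimpleGraph V} (hac : G.IsAcyclic) {a b c : V}
    (h1 : G.Adj a b) (h2 : G.Adj b c) (h3 : G.Adj a c) : False := by
  refine no_two_paths hac (p := Walk.cons h3 Walk.nil)
    (q := Walk.cons h1 (Walk.cons h2 Walk.nil)) ?_ ?_ ?_
  · simp [Walk.isPath_def, h3.ne]
  · simp [Walk.isPath_def, h1.ne, h2.ne, h3.ne]
  · intro he; apply_fun Walk.length at he; simp at he

lemma no_common_two {G : SimpleGraph V} (hac : G.IsAcyclic) {a b c d : V}
    (h1 : G.Adj a c) (h2 : G.Adj c b) (h3 : G.Adj a d) (h4 : G.Adj d b)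
    (hcd : c ≠ d) (hab : a ≠ b) : False := by
  refine no_two_paths hac (p := Walk.cons h1 (Walk.cons h2 Walk.nil))
    (q := Walk.cons h3 (Walk.cons h4 Walk.nil)) ?_ ?_ ?_
  · simp [Walk.isPath_def, h1.ne, h2.ne, hab]
  · simp [Walk.isPath_def, h3.ne, h4.ne, hab]
  · intro he
    have := congrArg Walk.support he
    simp [Walk.support_cons] at this
    exact hcd this

lemma no_c4 {G : SimpleGraph V} (hac : G.IsAcyclic) {a b c d : V}
    (h1 : G.Adj a b) (h2 : G.Adj b c) (h3 : G.Adj c d) (h4 : G.Adj a d)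
    (hac' : a ≠ c) (hbd : b ≠ d) : False := by
  refine no_two_paths hac (p := Walk.cons h4 Walk.nil)
    (q := Walk.cons h1 (Walk.cons h2 (Walk.cons h3 Walk.nil))) ?_ ?_ ?_
  · simp [Walk.isPath_def, h4.ne]
  · simp [Walk.isPath_def, h1.ne, h2.ne, h3.ne, h4.ne, hac', hbd]
  · intro he; apply_fun Walk.length at he; simp at he

lemma no_two_p3 {G : SimpleGraph V} (hac : G.IsAcyclic) {a b x y p q : V}
    (h1 : G.Adj a x) (h2 : G.Adj x y) (h3 : G.Adj y b)
    (h1' : G.Adj a p) (h2' : G.Adj p q) (h3' : G.Adj q b)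
    (hab : a ≠ b) (hay : a ≠ y) (hxb : x ≠ b) (haq : a ≠ q) (hpb : p ≠ b)
    (hxp : x ≠ p) : False := by
  refine no_two_paths hac (p := Walk.cons h1 (Walk.cons h2 (Walk.cons h3 Walk.nil)))
    (q := Walk.cons h1' (Walk.cons h2' (Walk.cons h3' Walk.nil))) ?_ ?_ ?_
  · simp [Walk.isPath_def, h1.ne, h2.ne, h3.ne, hab, hay, hxb]
  · simp [Walk.isPath_def, h1'.ne, h2'.ne, h3'.ne, hab, haq, hpb]
  · intro he
    have := congrArg Walk.support he
    simp [Walk.support_cons] at this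
    exact hxp this.1

lemma degree'_eq_one {G : SimpleGraph V} {x w : V} (h1 : G.Adj x w)
    (h2 : ∀ y, G.Adj x y → y = w) : degree' G x = 1 := by
  rw [degree', Nat.card_eq_one_iff_unique]
  exact ⟨⟨fun a b => Subtype.ext ((h2 a a.2).trans (h2 b b.2).symm)⟩, ⟨⟨w, h1⟩⟩⟩

lemma eq_of_degree'_eq_one {G : SimpleGraph V} {x w y : V} (hd : degree' G x = 1)
    (h1 : G.Adj x w) (h2 : G.Adj x y) : w = y := by
  rw [degree', Nat.card_eq_one_iff_unique] at hd
  exact congrArg Subtype.val (@Subsingleton.elim _ hd.1 ⟨w, h1⟩ ⟨y, h2⟩)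

lemma parity_key {G : SimpleGraph V} {u v : V} (huv : u ≠ v) (h : ¬ IsOddSet G {u, v})
    {w z : V} (hwu : w ≠ u) (hwv : w ≠ v) (hzu : z ≠ u) (hzv : z ≠ v) (hwz : w ≠ z) :
    ((G.Adj u w ↔ G.Adj v w) ↔ (G.Adj u z ↔ G.Adj v z)) := by
  by_contra hc
  apply h
  refine ⟨Finset.card_pair huv, {w, z}, Finset.card_pair hwz, ?_, ?_⟩
  · rw [Finset.disjoint_left]
    intro a ha hb
    simp only [Finset.mem_insert, Finset.mem_singleton] at ha hb
    rcases ha with rfl | rfl <;> rcases hb with rfl | rfl <;> simp_all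
  · unfold edgeCount
    rw [Finset.sum_pair huv, Finset.sum_pair hwz, Finset.sum_pair hwz]
    by_cases h1 : G.Adj u w <;> by_cases h2 : G.Adj u z <;>
      by_cases h3 : G.Adj v w <;> by_cases h4 : G.Adj v z <;>
      simp_all <;> decide

lemma caseA (hconn : T.Connected) (hac : T.IsAcyclic) {u v t : V} (huv : u ≠ v)
    (htu : t ≠ u) (htv : t ≠ v)
    (hpar : ∀ w, w ≠ u → w ≠ v → (T.Adj u w ↔ T.Adj v w)) : CaseLeaves T u v := by
  have hex : ∃ w, w ≠ u ∧ w ≠ v ∧ T.Adj u w ∧ T.Adj v w := by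
    obtain ⟨p, hp, -⟩ := Reachable.exists_path_of_dist (hconn.preconnected u t)
    cases p with
    | nil => exact absurd rfl htu.symm
    | @cons _ x _ h1 p2 =>
      by_cases hxv : x = v
      · subst hxv
        cases p2 with
        | nil => exact absurd rfl htv.symm
        | @cons _ y _ h2 p3 =>
          rw [Walk.cons_isPath_iff, Walk.cons_isPath_iff] at hp
          have hymem : y ∈ (Walk.cons h2 p3).support := by
            simp [Walk.support_cons]
          have hyu : y ≠ u := fun hc => hp.2 (hc ▸ hymem)
          have hyx : y ≠ x := fun hc => hp.1.2 (hc ▸ Walk.start_mem_support p3)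
          exact ⟨y, hyu, hyx, (hpar y hyu hyx).mpr h2, h2⟩
      · have hxu : x ≠ u := h1.ne'
        exact ⟨x, hxu, hxv, h1, (hpar x hxu hxv).mp h1⟩
  obtain ⟨w, hwu, hwv, hw1, hw2⟩ := hex
  refine ⟨?_, ?_, w, hw1, hw2⟩
  · apply degree'_eq_one hw1
    intro y hy
    by_contra hyw
    have hyu : y ≠ u := hy.ne'
    by_cases hyv : y = v
    · subst hyv; exact no_triangle hac hy hw2 hw1
    · have hvy := (hpar y hyu hyv).mp hy
      exact no_common_two hac hw1 hw2.symm hy hvy.symm (Ne.symm hyw) huv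
  · apply degree'_eq_one hw2
    intro y hy
    by_contra hyw
    have hyv : y ≠ v := hy.ne'
    by_cases hyu : y = u
    · subst hyu; exact no_triangle hac hy hw1 hw2
    · have huy := (hpar y hyu hyv).mpr hy
      exact no_common_two hac hw2 hw1.symm hy huy.symm (Ne.symm hyw) huv.symm

lemma caseB1 (hac : T.IsAcyclic) {u v : V} (hadj : T.Adj u v)
    (hxor : ∀ w, w ≠ u → w ≠ v → ¬(T.Adj u w ↔ T.Adj v w)) : CaseDoubleStar T u v := by
  refine ⟨hadj, fun x hxu hxv => ?_⟩
  by_cases hux : T.Adj u x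
  · have hnvx : ¬ T.Adj v x := fun hc => hxor x hxu hxv ⟨fun _ => hc, fun _ => hux⟩
    refine ⟨degree'_eq_one hux.symm ?_, Or.inl hux.symm⟩
    intro y hy
    by_contra hyu
    have hyv : y ≠ v := fun hc => hnvx (hc ▸ hy).symm
    by_cases huy : T.Adj u y
    · exact no_triangle hac hux hy huy
    · have hvy : T.Adj v y := by have := hxor y hyu hyv; tauto
      exact no_c4 hac hux hy hvy.symm hadj (Ne.symm hyu) hxv
  · have hvx : T.Adj v x := by have := hxor x hxu hxv; tauto
    refine ⟨degree'_eq_one hvx.symm ?_, Or.inr hvx.symm⟩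
    intro y hy
    by_contra hyv
    have hyu : y ≠ u := fun hc => hux (hc ▸ hy).symm
    by_cases hvy : T.Adj v y
    · exact no_triangle hac hvx hy hvy
    · have huy : T.Adj u y := by have := hxor y hyu hyv; tauto
      exact no_c4 hac hvx hy huy.symm hadj.symm (Ne.symm hyv) hxu

lemma caseB2 (hconn : T.Connected) (hac : T.IsAcyclic) {u v : V} (huv : u ≠ v)
    (hnadj : ¬ T.Adj u v)
    (hxor : ∀ w, w ≠ u → w ≠ v → ¬(T.Adj u w ↔ T.Adj v w)) : CaseDistThree T u v := by
  obtain ⟨a, b, h1, h2, h3, hau, hav, hbu, hbv, hnva, hnub⟩ :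
      ∃ a b, T.Adj u a ∧ T.Adj a b ∧ T.Adj b v ∧ a ≠ u ∧ a ≠ v ∧ b ≠ u ∧ b ≠ v ∧
        ¬T.Adj v a ∧ ¬T.Adj u b := by
    obtain ⟨p, hp, -⟩ := Reachable.exists_path_of_dist (hconn.preconnected u v)
    cases p with
    | nil => exact absurd rfl huv
    | @cons _ a _ h1 p2 =>
      have hau : a ≠ u := h1.ne'
      have hav : a ≠ v := fun hc => hnadj (hc ▸ h1)
      have hnva : ¬ T.Adj v a := fun hc => hxor a hau hav ⟨fun _ => hc, fun _ => h1⟩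
      cases p2 with
      | nil => exact absurd rfl hav
      | @cons _ b _ h2 p3 =>
        rw [Walk.cons_isPath_iff, Walk.cons_isPath_iff] at hp
        have hbmem : b ∈ (Walk.cons h2 p3).support := by
          simp [Walk.support_cons]
        have hbu : b ≠ u := fun hc => hp.2 (hc ▸ hbmem)
        have hbv : b ≠ v := fun hc => hnva (hc ▸ h2).symm
        have hub : ¬ T.Adj u b := fun hc => no_triangle hac h1 h2 hc
        have hvb : T.Adj v b := by have := hxor b hbu hbv; tauto
        exact ⟨a, b, h1, h2, hvb.symm, hau, hav, hbu, hbv, hnva, hub⟩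
  have hd3 : T.dist u v = 3 := by
    have hle : T.dist u v ≤ 3 := by
      have := SimpleGraph.dist_le (Walk.cons h1 (Walk.cons h2 (Walk.cons h3 Walk.nil)))
      simpa using this
    have hne0 : T.dist u v ≠ 0 := by
      rw [SimpleGraph.dist_ne_zero_iff_ne_and_reachable]
      exact ⟨huv, hconn.preconnected u v⟩
    have hne1 : T.dist u v ≠ 1 := by
      rw [Ne, SimpleGraph.dist_eq_one_iff_adj]; exact hnadj
    have hne2 : T.dist u v ≠ 2 := by
      intro hd2
      obtain ⟨w2, hw2⟩ := SimpleGraph.exists_walk_of_dist_ne_zero hne0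
      rw [hd2] at hw2
      cases w2 with
      | nil => simp at hw2
      | @cons _ m _ hm q =>
        cases q with
        | nil => simp at hw2
        | @cons _ m2 _ hm2 q2 =>
          cases q2 with
          | nil =>
            exact hxor m hm.ne' (fun hc => hnadj (hc ▸ hm))
              ⟨fun _ => hm2.symm, fun _ => hm⟩
          | cons h q3 =>
            simp [Walk.length_cons] at hw2
    omega
  refine ⟨hd3, a, b, h1, h2, h3, fun x hx => ?_⟩
  simp only [Set.mem_insert_iff, Set.mem_singleton_iff, not_or] at hx
  obtain ⟨hxu, hxa, hxb, hxv⟩ := hx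
  by_cases hux : T.Adj u x
  · have hnvx : ¬ T.Adj v x := fun hc => hxor x hxu hxv ⟨fun _ => hc, fun _ => hux⟩
    refine ⟨degree'_eq_one hux.symm ?_, Or.inl hux.symm⟩
    intro y hy
    by_contra hyu
    have hyv : y ≠ v := fun hc => hnvx (hc ▸ hy).symm
    by_cases huy : T.Adj u y
    · exact no_triangle hac hux hy huy
    · have hvy : T.Adj v y := by have := hxor y hyu hyv; tauto
      by_cases hyb : y = b
      · subst hyb
        exact no_common_two hac hux hy h1 h2 hxa (Ne.symm hbu)
      · exact no_two_p3 hac hux hy hvy.symm h1 h2 h3 huv (Ne.symm hyu) hxv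
          (Ne.symm hbu) hav hxa
  · have hvx : T.Adj v x := by have := hxor x hxu hxv; tauto
    refine ⟨degree'_eq_one hvx.symm ?_, Or.inr hvx.symm⟩
    intro y hy
    by_contra hyv
    have hyu : y ≠ u := fun hc => hux (hc ▸ hy).symm
    by_cases hvy : T.Adj v y
    · exact no_triangle hac hvx hy hvy
    · have huy : T.Adj u y := by have := hxor y hyu hyv; tauto
      by_cases hya : y = a
      · subst hya
        exact no_common_two hac hvx hy h3.symm h2.symm hxb (Ne.symm hav)
      · exact no_two_p3 hac hvx hy huy.symm h3.symm h2.symm h1.symm huv.symm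
          (Ne.symm hyv) hxu (Ne.symm hav) hbu hxb

end TreeHelpers


/-- if `{u,v}` is not an odd set of a tree of order at least 4, then exactly one
of the three structural cases occurs. -/
theorem not_oddSet_trichotomy [Fintype V] (T : SimpleGraph V) (hT : T.IsTree)
    (hn : 4 ≤ Fintype.card V) (u v : V) (huv : u ≠ v) (h : ¬ IsOddSet T {u, v}) :
    (CaseLeaves T u v ∧ ¬ CaseDoubleStar T u v ∧ ¬ CaseDistThree T u v) ∨
    (¬ CaseLeaves T u v ∧ CaseDoubleStar T u v ∧ ¬ CaseDistThree T u v) ∨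
    (¬ CaseLeaves T u v ∧ ¬ CaseDoubleStar T u v ∧ CaseDistThree T u v) := by
  have hac := hT.IsAcyclic
  have hconn := hT.isConnected
  have hcard2 : 1 < (Finset.univ \ {u, v} : Finset V).card := by
    have h2 : ({u, v} : Finset V).card = 2 := Finset.card_pair huv
    rw [Finset.card_sdiff_of_subset (Finset.subset_univ _), h2, Finset.card_univ]
    omega
  obtain ⟨w0, hw0m, z0, hz0m, hwz0⟩ := Finset.one_lt_card.mp hcard2
  simp only [Finset.mem_sdiff, Finset.mem_univ, Finset.mem_insert,
    Finset.mem_singleton, true_and, not_or] at hw0m hz0m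
  have dich : (∀ w, w ≠ u → w ≠ v → (T.Adj u w ↔ T.Adj v w)) ∨
      (∀ w, w ≠ u → w ≠ v → ¬(T.Adj u w ↔ T.Adj v w)) := by
    by_cases h0 : (T.Adj u w0 ↔ T.Adj v w0)
    · left; intro w hwu hwv
      by_cases hww0 : w = w0
      · exact hww0 ▸ h0
      · exact (parity_key huv h hwu hwv hw0m.1 hw0m.2 hww0).mpr h0
    · right; intro w hwu hwv hcon
      by_cases hww0 : w = w0
      · exact h0 (hww0 ▸ hcon)
      · exact h0 ((parity_key huv h hwu hwv hw0m.1 hw0m.2 hww0).mp hcon)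
  have main : CaseLeaves T u v ∨ CaseDoubleStar T u v ∨ CaseDistThree T u v := by
    rcases dich with hpar | hxor
    · exact Or.inl (caseA hconn hac huv hw0m.1 hw0m.2 hpar)
    · by_cases hadj : T.Adj u v
      · exact Or.inr (Or.inl (caseB1 hac hadj hxor))
      · exact Or.inr (Or.inr (caseB2 hconn hac huv hadj hxor))
  have e12 : CaseLeaves T u v → CaseDoubleStar T u v → False := by
    rintro ⟨du, dv, w, hw1, hw2⟩ ⟨hadj, -⟩
    exact hw2.ne' (eq_of_degree'_eq_one du hw1 hadj)
  have e13 : CaseLeaves T u v → CaseDistThree T u v → False := by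
    rintro ⟨-, -, w, hw1, hw2⟩ ⟨hd, -⟩
    have := SimpleGraph.dist_le (Walk.cons hw1 (Walk.cons hw2.symm Walk.nil))
    simp at this
    omega
  have e23 : CaseDoubleStar T u v → CaseDistThree T u v → False := by
    rintro ⟨hadj, -⟩ ⟨hd, -⟩
    rw [← SimpleGraph.dist_eq_one_iff_adj] at hadj
    omega
  rcases main with h1 | h2 | h3
  · exact Or.inl ⟨h1, fun c => e12 h1 c, fun c => e13 h1 c⟩
  · exact Or.inr (Or.inl ⟨fun c => e12 c h2, h2, fun c => e23 h2 c⟩)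
  · exact Or.inr (Or.inr ⟨fun c => e13 c h3, fun c => e23 c h3, h3⟩)
end

section
/- Let T be a tree of order n ≥ 4 that is not a star, and not a path on 4, 5, or 6 vertices. Then the number of odd sets of T is at least n(n − D(T))/2, where D(T) is the maximum number of leaves of T adjacent to a single vertex. -/
open SimpleGraph Finset
open scoped Classical

variable {V : Type*}

lemma degree'_eq [Fintype V] (G : SimpleGraph V) (v : V) : degree' G v = G.degree v := by
  rw [degree', Nat.card_eq_fintype_card, ← card_neighborSet_eq_degree]
  rfl

lemma leafCount_eq [Fintype V] (G : SimpleGraph V) (w : V) :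
    Nat.card {u : V // G.Adj w u ∧ degree' G u = 1}
      = (univ.filter (fun z => G.Adj w z ∧ G.degree z = 1)).card := by
  rw [Nat.card_eq_fintype_card, Fintype.card_subtype]
  congr 1
  ext z
  simp [degree'_eq]

-- adjacency-closed sets are everything, in a connected graph

lemma closed_eq_univ {G : SimpleGraph V} (hc : G.Connected) {s : Set V}
    (hs : ∀ a ∈ s, ∀ b, G.Adj a b → b ∈ s) {a : V} (ha : a ∈ s) : ∀ z, z ∈ s := by
  intro z
  obtain ⟨w⟩ := hc.preconnected a z
  induction w with
  | nil => exact ha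
  | cons h p ih => exact ih (hs _ ha _ h)

lemma exists_nbr [Fintype V] {G : SimpleGraph V} (hc : G.Connected)
    (hn : 2 ≤ Fintype.card V) (v : V) : ∃ w, G.Adj v w := by
  rw [← G.degree_pos_iff_exists_adj]
  by_contra h
  push_neg at h
  rw [Nat.le_zero] at h
  have : ∀ z, z ∈ ({v} : Set V) := by
    refine closed_eq_univ hc ?_ (Set.mem_singleton v)
    intro a ha b hb
    have hav : a = v := ha
    rw [hav] at hb
    have hb' : b ∈ G.neighborFinset v := by simpa using hb
    rw [Finset.card_eq_zero.mp h] at hb'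
    simp at hb'
  obtain ⟨u, hu⟩ := Fintype.exists_ne_of_one_lt_card (by omega) v
  exact hu (this u)

lemma unique_nbr [Fintype V] {G : SimpleGraph V} {z w w' : V} (hz : G.degree z = 1)
    (h1 : G.Adj z w) (h2 : G.Adj z w') : w = w' := by
  have hw : w ∈ G.neighborFinset z := by simpa using h1
  have hw' : w' ∈ G.neighborFinset z := by simpa using h2
  obtain ⟨a, ha⟩ := Finset.card_eq_one.mp hz
  rw [ha] at hw hw'
  simp at hw hw'
  rw [hw, hw']

lemma path2_isPath {T : SimpleGraph V} {u w v : V} (h1 : T.Adj u w) (h2 : T.Adj w v)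
    (huv : u ≠ v) : (Walk.cons h1 (Walk.cons h2 Walk.nil)).IsPath := by
  simp [Walk.isPath_def, h1.ne, h2.ne, huv]

lemma no_triangle_s12 {T : SimpleGraph V} (hT : T.IsTree) {u v w : V}
    (h1 : T.Adj u v) (h2 : T.Adj u w) (h3 : T.Adj w v) : False := by
  have hp1 : (Walk.cons h1 Walk.nil).IsPath := by simp [Walk.isPath_def, h1.ne]
  have hp2 := path2_isPath h2 h3 h1.ne
  have := (hT.existsUnique_path u v).unique hp1 hp2
  have hlen := congrArg Walk.length this
  simp [Walk.length_cons] at hlen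

lemma no_c4_s12 {T : SimpleGraph V} (hT : T.IsTree) {u v w1 w2 : V} (huv : u ≠ v)
    (h1 : T.Adj u w1) (h2 : T.Adj w1 v) (h3 : T.Adj u w2) (h4 : T.Adj w2 v) : w1 = w2 := by
  have hp1 := path2_isPath h1 h2 huv
  have hp2 := path2_isPath h3 h4 huv
  have := (hT.existsUnique_path u v).unique hp1 hp2
  have hsup := congrArg Walk.support this
  simp [Walk.support_cons] at hsup
  exact hsup

lemma edgeCount_pair {T : SimpleGraph V} {u v x y : V} (huv : u ≠ v) (hxy : x ≠ y) :
    edgeCount T {u, v} {x, y} =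
      ((if T.Adj u x then 1 else 0) + (if T.Adj v x then 1 else 0)) +
      ((if T.Adj u y then 1 else 0) + (if T.Adj v y then 1 else 0)) := by
  rw [edgeCount, Finset.sum_pair huv, Finset.sum_pair hxy, Finset.sum_pair hxy]
  ring

lemma bad_classify [Fintype V] {T : SimpleGraph V} (hT : T.IsTree) (hn : 4 ≤ Fintype.card V)
    {u v : V} (huv : u ≠ v) (hbad : ¬ IsOddSet T {u, v}) :
    (T.degree u = 1 ∧ T.degree v = 1 ∧ ∃ w, T.Adj w u ∧ T.Adj w v) ∨
    (∀ x, x ≠ u → x ≠ v → Xor' (T.Adj u x) (T.Adj v x)) := by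
  set np : V → ℕ := fun x => (if T.Adj u x then 1 else 0) + (if T.Adj v x then 1 else 0) with hnp
  have key : ∀ x y : V, x ≠ u → x ≠ v → y ≠ u → y ≠ v → x ≠ y → Even (np x + np y) := by
    intro x y hxu hxv hyu hyv hxy
    rw [← Nat.not_odd_iff_even]
    intro hodd
    refine hbad ⟨Finset.card_pair huv, {x, y}, Finset.card_pair hxy, ?_, ?_⟩
    · rw [Finset.disjoint_left]
      intro a ha hb
      simp only [Finset.mem_insert, Finset.mem_singleton] at ha hb
      rcases ha with rfl | rfl <;> rcases hb with h | h <;> simp_all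
    · rwa [edgeCount_pair huv hxy]
  obtain ⟨x0, hx0u, hx0v⟩ : ∃ x0, x0 ≠ u ∧ x0 ≠ v := by
    by_contra h
    push_neg at h
    have hsub : (univ : Finset V) ⊆ {u, v} := by
      intro x _
      rcases em (x = u) with rfl | hxu
      · simp
      · simp [h x hxu]
    have := Finset.card_le_card hsub
    simp only [Finset.card_univ] at this
    have h2 : ({u, v} : Finset V).card ≤ 2 := (Finset.card_insert_le _ _).trans (by simp)
    omega
  have parity : ∀ x, x ≠ u → x ≠ v → (Odd (np x) ↔ Odd (np x0)) := by
    intro x hxu hxv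
    rcases em (x = x0) with rfl | hxx0
    · rfl
    · have := key x x0 hxu hxv hx0u hx0v hxx0
      rw [Nat.even_add] at this
      rw [← Nat.not_even_iff_odd, ← Nat.not_even_iff_odd]
      tauto
  by_cases hpar : Odd (np x0)
  · right
    intro x hxu hxv
    have hx := (parity x hxu hxv).mpr hpar
    by_cases h1 : T.Adj u x <;> by_cases h2 : T.Adj v x <;>
      simp [hnp, h1, h2, Xor', Nat.odd_iff] at hx ⊢
  · left
    have heven : ∀ x, x ≠ u → x ≠ v → (T.Adj u x ↔ T.Adj v x) := by
      intro x hxu hxv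
      have hx : ¬ Odd (np x) := fun h => hpar ((parity x hxu hxv).mp h)
      by_cases h1 : T.Adj u x <;> by_cases h2 : T.Adj v x <;>
        simp [hnp, h1, h2, Nat.odd_iff] at hx ⊢
    have hAdjuv : ¬ T.Adj u v := by
      intro huvadj
      by_cases hw : ∃ w, w ≠ v ∧ T.Adj u w
      · obtain ⟨w, hwv, hww⟩ := hw
        exact no_triangle_s12 hT huvadj hww (((heven w hww.ne' hwv).mp hww).symm)
      · push_neg at hw
        have hv : ∀ w, ¬ T.Adj v w ∨ w = u := by
          intro w
          by_cases hwu : w = u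
          · right; exact hwu
          · left; intro hadj
            exact hw w hadj.ne' ((heven w hwu hadj.ne').mpr hadj)
        have hclosed : ∀ z, z ∈ ({u, v} : Set V) := by
          refine closed_eq_univ hT.isConnected ?_ (Set.mem_insert u {v})
          rintro a (rfl | rfl) b hb
          · rcases em (b = v) with rfl | hbv
            · right; rfl
            · exact absurd hb (hw b hbv)
          · rcases hv b with h | rfl
            · exact absurd hb h
            · left; rfl
        have := hclosed x0
        simp at this
        tauto
    obtain ⟨w, hw⟩ := exists_nbr hT.isConnected (by omega) u
    have hwv : w ≠ v := by rintro rfl; exact hAdjuv hw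
    have hvw : T.Adj v w := (heven w hw.ne' hwv).mp hw
    have hdegu : T.degree u = 1 := by
      have : T.neighborFinset u = {w} := by
        ext z
        simp only [mem_neighborFinset, Finset.mem_singleton]
        constructor
        · intro hz
          have hzv : z ≠ v := by rintro rfl; exact hAdjuv hz
          have hvz : T.Adj v z := (heven z hz.ne' hzv).mp hz
          exact no_c4_s12 hT huv hz hvz.symm hw hvw.symm
        · rintro rfl; exact hw
      rw [SimpleGraph.degree, this, Finset.card_singleton]
    have hdegv : T.degree v = 1 := by
      have : T.neighborFinset v = {w} := by
        ext z
        simp only [mem_neighborFinset, Finset.mem_singleton]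
        constructor
        · intro hz
          have hzu : z ≠ u := by rintro rfl; exact hAdjuv hz.symm
          have huz : T.Adj u z := (heven z hzu hz.ne').mpr hz
          exact no_c4_s12 hT huv.symm hz huz.symm hvw hw.symm
        · rintro rfl; exact hvw
      rw [SimpleGraph.degree, this, Finset.card_singleton]
    exact ⟨hdegu, hdegv, w, hw.symm, hvw.symm⟩

def TB (T : SimpleGraph V) (u v : V) : Prop :=
  u ≠ v ∧ ∀ x, x ≠ u → x ≠ v → Xor' (T.Adj u x) (T.Adj v x)

lemma TB.symm {T : SimpleGraph V} {u v : V} (h : TB T u v) : TB T v u :=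
  ⟨h.1.symm, fun x hxv hxu => (h.2 x hxu hxv).symm⟩

lemma all_one {α : Type*} {s : Finset α} {f : α → ℕ} (h1 : ∀ x ∈ s, 1 ≤ f x)
    (h2 : ∑ x ∈ s, f x = s.card) : ∀ x ∈ s, f x = 1 := by
  intro x hx
  by_contra hne
  have hlt : ∑ y ∈ s, (1 : ℕ) < ∑ y ∈ s, f y :=
    Finset.sum_lt_sum h1 ⟨x, hx, by have := h1 x hx; omega⟩
  simp [Finset.sum_const] at hlt
  omega

lemma DS_aux [Fintype V] {T : SimpleGraph V} {u v m v' : V}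
    (huv : T.Adj u v) (hdeg : ∀ z, z ≠ u → z ≠ v → T.degree z = 1)
    (hm : T.Adj v m) (hmu : m ≠ u)
    (hv'u : v' ≠ u) (hv'v : v' ≠ v) (hB' : TB T u v') : False := by
  have hx' := hB'.2
  have hnv'v : ¬ T.Adj v' v := by
    have := hx' v (Ne.symm huv.ne) (Ne.symm hv'v)
    rcases this with ⟨_, h⟩ | ⟨h, _⟩
    · exact h
    · exact absurd huv (by tauto)
  have hmv' : m ≠ v' := by rintro rfl; exact hnv'v hm.symm
  have hdm : T.degree m = 1 := hdeg m hmu (Ne.symm hm.ne)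
  have := hx' m hmu hmv'
  rcases this with ⟨h, _⟩ | ⟨h, _⟩
  · exact huv.ne (unique_nbr hdm hm.symm h.symm).symm
  · exact hv'v (unique_nbr hdm h.symm hm.symm)

lemma EDS_unique2 [Fintype V] {T : SimpleGraph V} {u v x y z : V}
    (hnadj : ¬ T.Adj u v) (hux : T.Adj u x) (hxy : T.Adj x y) (hvy : T.Adj v y)
    (hnx : T.neighborFinset x = {u, y}) (hny : T.neighborFinset y = {v, x})
    (hleaf : ∀ w, w ≠ u → w ≠ v → w ≠ x → w ≠ y → T.degree w = 1)
    (huv : u ≠ v) (hB' : TB T u z) : z = v := by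
  obtain ⟨hzu, hx'⟩ := hB'
  by_contra hzv
  -- basic distinctness facts
  have hyu : y ≠ u := by rintro rfl; exact hnadj hvy.symm
  have hvy' : v ≠ y := hvy.ne
  have hxu : x ≠ u := hux.ne'
  have hxv : x ≠ v := by
    rintro rfl
    exact hnadj hux
  have hxyne : x ≠ y := hxy.ne
  have hnuy : ¬ T.Adj u y := by
    intro h
    have : u ∈ T.neighborFinset y := by simpa using h.symm
    rw [hny] at this
    simp at this
    rcases this with rfl | rfl
    · exact huv rfl
    · exact hxu rfl
  -- v is adjacent to z
  have hzv' : T.Adj z v := by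
    rcases hx' v huv.symm (Ne.symm hzv) with ⟨h, _⟩ | ⟨h, _⟩
    · exact absurd h hnadj
    · exact h
  rcases em (z = y) with hzy | hzy
  · rcases hx' x hxu (by rw [hzy]; exact hxyne) with ⟨_, h1⟩ | ⟨_, h2⟩
    · exact h1 (by rw [hzy]; exact hxy.symm)
    · exact h2 hux
  · -- z is a leaf with neighbor v
    have hzx : z ≠ x := by
      intro h
      rw [h] at hzv'
      have hv : v ∈ T.neighborFinset x := by simpa using hzv'
      rw [hnx] at hv
      simp at hv
      rcases hv with h' | h'
      · exact huv h'.symm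
      · exact hvy' h'
    have hdz : T.degree z = 1 := hleaf z (Ne.symm hzu) hzv hzx hzy
    rcases hx' y hyu (Ne.symm hzy) with ⟨h, _⟩ | ⟨h, _⟩
    · exact hnuy h
    · exact hvy' (unique_nbr hdz hzv' h)

lemma EDS_unique [Fintype V] {T : SimpleGraph V} {u v x y l1 l2 : V}
    (hnadj : ¬ T.Adj u v) (hux : T.Adj u x) (hxy : T.Adj x y) (hvy : T.Adj v y)
    (hnx : T.neighborFinset x = {u, y}) (hny : T.neighborFinset y = {v, x})
    (hleaf : ∀ w, w ≠ u → w ≠ v → w ≠ x → w ≠ y → T.degree w = 1)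
    (huv : u ≠ v)
    (hl1 : T.Adj u l1) (hl2 : T.Adj u l2) (hl12 : l1 ≠ l2) (hl1x : l1 ≠ x) (hl2x : l2 ≠ x) :
    ∀ u' v', TB T u' v' → ({u', v'} : Finset V) = {u, v} := by
  have hxu : x ≠ u := hux.ne'
  have hlprop : ∀ l, T.Adj u l → l ≠ x → (T.degree l = 1 ∧ ∀ w, T.Adj l w → w = u) := by
    intro l hl hlx
    have hlu : l ≠ u := hl.ne'
    have hlv : l ≠ v := by rintro rfl; exact hnadj hl
    have hly : l ≠ y := by
      rintro rfl
      have : u ∈ T.neighborFinset l := by simpa using hl.symm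
      rw [hny] at this
      simp at this
      rcases this with h | h
      · exact huv h
      · exact hxu h.symm
    have hd : T.degree l = 1 := hleaf l hlu hlv hlx hly
    exact ⟨hd, fun w hw => (unique_nbr hd hw hl.symm)⟩
  obtain ⟨hd1, hn1⟩ := hlprop l1 hl1 hl1x
  obtain ⟨hd2, hn2⟩ := hlprop l2 hl2 hl2x
  intro u' v' hB'
  obtain ⟨hne', hx'⟩ := hB'
  have hu' : u = u' ∨ u = v' := by
    by_cases c1 : l1 = u' ∨ l1 = v'
    · by_cases c2 : l2 = u' ∨ l2 = v'
      · exfalso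
        have hxl1 : x ≠ l1 := Ne.symm hl1x
        have hxl2 : x ≠ l2 := Ne.symm hl2x
        have hnadj1 : ¬ T.Adj l1 x := fun h => hxu (hn1 x h)
        have hnadj2 : ¬ T.Adj l2 x := fun h => hxu (hn2 x h)
        have cu' : u' = l1 ∨ u' = l2 := by
          rcases c1 with h | h
          · exact Or.inl h.symm
          · rcases c2 with h' | h'
            · exact Or.inr h'.symm
            · exact absurd (h.trans h'.symm) hl12
        have cv' : v' = l1 ∨ v' = l2 := by
          rcases c1 with h | h
          · rcases c2 with h' | h'
            · exact absurd (h.trans h'.symm) hl12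
            · exact Or.inr h'.symm
          · exact Or.inl h.symm
        have hxu' : x ≠ u' := by
          rcases cu' with h | h <;> rw [h]
          · exact hxl1
          · exact hxl2
        have hxv' : x ≠ v' := by
          rcases cv' with h | h <;> rw [h]
          · exact hxl1
          · exact hxl2
        have hA1 : ¬ T.Adj u' x := by
          rcases cu' with h | h <;> rw [h]
          · exact hnadj1
          · exact hnadj2
        have hA2 : ¬ T.Adj v' x := by
          rcases cv' with h | h <;> rw [h]
          · exact hnadj1
          · exact hnadj2
        rcases hx' x hxu' hxv' with ⟨h, _⟩ | ⟨h, _⟩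
        · exact hA1 h
        · exact hA2 h
      · push_neg at c2
        rcases hx' l2 c2.1 c2.2 with ⟨h, _⟩ | ⟨h, _⟩
        · exact Or.inl (hn2 u' h.symm).symm
        · exact Or.inr (hn2 v' h.symm).symm
    · push_neg at c1
      rcases hx' l1 c1.1 c1.2 with ⟨h, _⟩ | ⟨h, _⟩
      · exact Or.inl (hn1 u' h.symm).symm
      · exact Or.inr (hn1 v' h.symm).symm
  rcases hu' with h | h
  · have hB2 : TB T u v' := by rw [h]; exact ⟨hne', hx'⟩
    have := EDS_unique2 hnadj hux hxy hvy hnx hny hleaf huv hB2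
    rw [← h, this]
  · have hB2 : TB T u u' := by rw [h]; exact ⟨hne'.symm, fun w hw1 hw2 => (hx' w hw2 hw1).symm⟩
    have := EDS_unique2 hnadj hux hxy hvy hnx hny hleaf huv hB2
    rw [← h, this, Finset.pair_comm]

lemma tree_path_iso [Fintype V] {T : SimpleGraph V} (hT : T.IsTree) (k : ℕ)
    (f : Fin (k + 1) ≃ V) (hcard : Fintype.card V = k + 1)
    (hadj : ∀ i : Fin k, T.Adj (f i.castSucc) (f i.succ)) :
    Nonempty (T ≃g pathGraph (k + 1)) := by
  classical
  set F : Finset (Sym2 V) := univ.image (fun i : Fin k => s(f i.castSucc, f i.succ)) with hF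
  have hsub : F ⊆ T.edgeFinset := by
    intro e he
    rw [hF, Finset.mem_image] at he
    obtain ⟨i, _, rfl⟩ := he
    rw [mem_edgeFinset]
    exact (hadj i)
  have hinj : Function.Injective (fun i : Fin k => s(f i.castSucc, f i.succ)) := by
    intro i j hij
    simp only [Sym2.eq_iff] at hij
    rcases hij with ⟨h1, h2⟩ | ⟨h1, h2⟩
    · exact Fin.castSucc_injective k (f.injective h1)
    · have e1 := congrArg Fin.val (f.injective h1)
      have e2 := congrArg Fin.val (f.injective h2)
      simp [Fin.coe_castSucc, Fin.val_succ] at e1 e2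
      omega
  have hcardF : F.card = k := by
    rw [hF, Finset.card_image_of_injective _ hinj, Finset.card_univ, Fintype.card_fin]
  have hE : F = T.edgeFinset := by
    refine Finset.eq_of_subset_of_card_le hsub ?_
    have := hT.card_edgeFinset
    rw [hcard] at this
    omega
  have adjiff : ∀ a b : V, T.Adj a b ↔ ∃ i : Fin k, s(a, b) = s(f i.castSucc, f i.succ) := by
    intro a b
    constructor
    · intro h
      have : s(a, b) ∈ T.edgeFinset := by rwa [mem_edgeFinset]
      rw [← hE, hF, Finset.mem_image] at this
      obtain ⟨i, _, hi⟩ := this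
      exact ⟨i, hi.symm⟩
    · rintro ⟨i, hi⟩
      rw [Sym2.eq_iff] at hi
      rcases hi with ⟨h1, h2⟩ | ⟨h1, h2⟩
      · rw [h1, h2]; exact hadj i
      · rw [h1, h2]; exact (hadj i).symm
  have key : ∀ p q : Fin (k + 1), ((pathGraph (k + 1)).Adj p q ↔ T.Adj (f p) (f q)) := by
    intro p q
    rw [pathGraph_adj, adjiff]
    constructor
    · rintro (h | h)
      · have hp : (p : ℕ) < k := by have := q.isLt; omega
        have e1 : f p = f ((⟨(p : ℕ), hp⟩ : Fin k).castSucc) := by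
          congr 1; try (apply Fin.ext; simp)
        have e2 : f q = f (Fin.succ ⟨(p : ℕ), hp⟩) := by
          congr 1; try (apply Fin.ext; simp only [Fin.val_succ]; omega)
        exact ⟨⟨(p : ℕ), hp⟩, by rw [← e1, ← e2]⟩
      · have hq : (q : ℕ) < k := by have := p.isLt; omega
        have e1 : f q = f ((⟨(q : ℕ), hq⟩ : Fin k).castSucc) := by
          congr 1; try (apply Fin.ext; simp)
        have e2 : f p = f (Fin.succ ⟨(q : ℕ), hq⟩) := by
          congr 1; try (apply Fin.ext; simp only [Fin.val_succ]; omega)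
        exact ⟨⟨(q : ℕ), hq⟩, by rw [← e1, ← e2, Sym2.eq_swap]⟩
    · rintro ⟨i, hi⟩
      rw [Sym2.eq_iff] at hi
      rcases hi with ⟨h1, h2⟩ | ⟨h1, h2⟩
      · left
        have e1 := congrArg Fin.val (f.injective h1)
        have e2 := congrArg Fin.val (f.injective h2)
        simp at e1 e2
        omega
      · right
        have e1 := congrArg Fin.val (f.injective h1)
        have e2 := congrArg Fin.val (f.injective h2)
        simp at e1 e2
        omega
  refine ⟨⟨f.symm, ?_⟩⟩
  intro a b
  rw [key, f.apply_symm_apply, f.apply_symm_apply]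

lemma build_iso [Fintype V] {T : SimpleGraph V} (hT : T.IsTree) (k : ℕ) (f : Fin (k + 1) → V)
    (hinj : Function.Injective f) (hcard : Fintype.card V = k + 1)
    (hadj : ∀ i : Fin k, T.Adj (f i.castSucc) (f i.succ)) :
    Nonempty (T ≃g pathGraph (k + 1)) := by
  have hbij : Function.Bijective f :=
    (Fintype.bijective_iff_injective_and_card f).mpr ⟨hinj, by simp [hcard]⟩
  exact tree_path_iso hT k (Equiv.ofBijective f hbij) hcard (fun i => hadj i)

lemma inj4 {α : Type*} {a b c d : α} (h1 : a≠b) (h2 : a≠c) (h3 : a≠d) (h4 : b≠c) (h5 : b≠d)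
    (h6 : c≠d) : Function.Injective ![a,b,c,d] := by
  intro i j hij
  fin_cases i <;> fin_cases j <;> simp_all

lemma inj5 {α : Type*} {a b c d e : α} (h1 : a≠b) (h2 : a≠c) (h3 : a≠d) (h4 : a≠e) (h5 : b≠c)
    (h6 : b≠d) (h7 : b≠e) (h8 : c≠d) (h9 : c≠e) (h10 : d≠e) :
    Function.Injective ![a,b,c,d,e] := by
  intro i j hij
  fin_cases i <;> fin_cases j <;> simp_all

lemma inj6 {α : Type*} {a b c d e f : α} (h1 : a≠b) (h2 : a≠c) (h3 : a≠d) (h4 : a≠e) (h5 : a≠f)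
    (h6 : b≠c) (h7 : b≠d) (h8 : b≠e) (h9 : b≠f) (h10 : c≠d) (h11 : c≠e) (h12 : c≠f)
    (h13 : d≠e) (h14 : d≠f) (h15 : e≠f) :
    Function.Injective ![a,b,c,d,e,f] := by
  intro i j hij
  fin_cases i <;> fin_cases j <;>
    simp only [Matrix.cons_val_zero, Matrix.cons_val_one, Matrix.head_cons, Matrix.cons_val_succ,
      Matrix.cons_val_fin_one, Fin.mk_zero, Fin.mk_one] at hij <;>
    first
      | rfl
      | exact absurd hij (by assumption)
      | exact absurd hij.symm (by assumption)

lemma adj4 {T : SimpleGraph V} {a b c d : V} (e1 : T.Adj a b) (e2 : T.Adj b c) (e3 : T.Adj c d) :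
    ∀ i : Fin 3, T.Adj (![a,b,c,d] i.castSucc) (![a,b,c,d] i.succ) := by
  intro i
  fin_cases i <;> simp [Fin.castSucc, Fin.succ] <;> assumption

lemma adj5 {T : SimpleGraph V} {a b c d e : V} (e1 : T.Adj a b) (e2 : T.Adj b c)
    (e3 : T.Adj c d) (e4 : T.Adj d e) :
    ∀ i : Fin 4, T.Adj (![a,b,c,d,e] i.castSucc) (![a,b,c,d,e] i.succ) := by
  intro i
  fin_cases i <;> simp [Fin.castSucc, Fin.succ] <;> assumption

lemma adj6 {T : SimpleGraph V} {a b c d e f : V} (e1 : T.Adj a b) (e2 : T.Adj b c)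
    (e3 : T.Adj c d) (e4 : T.Adj d e) (e5 : T.Adj e f) :
    ∀ i : Fin 5, T.Adj (![a,b,c,d,e,f] i.castSucc) (![a,b,c,d,e,f] i.succ) := by
  intro i
  fin_cases i <;> simp [Fin.castSucc, Fin.succ] <;> assumption

lemma leafCount_le_max [Fintype V] (T : SimpleGraph V) (w : V) :
    (univ.filter (fun z => T.Adj w z ∧ T.degree z = 1)).card ≤ maxLeafCount T := by
  rw [maxLeafCount]
  exact le_trans (le_of_eq (leafCount_eq T w).symm)
    (Finset.le_sup (f := fun w => Nat.card {u : V // T.Adj w u ∧ degree' T u = 1})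
      (Finset.mem_univ w))

lemma EDS_branch [Fintype V] {T : SimpleGraph V} (hT : T.IsTree) (hn : 4 ≤ Fintype.card V)
    (h4 : ¬ Nonempty (T ≃g pathGraph 4)) (h5 : ¬ Nonempty (T ≃g pathGraph 5))
    (h6 : ¬ Nonempty (T ≃g pathGraph 6))
    {u v x : V} (hB : TB T u v) (hadj : ¬ T.Adj u v) (hux : T.Adj u x) (hx2 : 2 ≤ T.degree x)
    (hsum : ∑ z ∈ univ \ ({u, v} : Finset V), T.degree z = Fintype.card V) :
    2 ≤ maxLeafCount T ∧ ∀ u' v', TB T u' v' → ({u', v'} : Finset V) = {u, v} := by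
  obtain ⟨huv, hx⟩ := hB
  set n := Fintype.card V with hn'
  set ou := univ \ ({u, v} : Finset V) with hou
  have hmem : ∀ z : V, z ∈ ou ↔ z ≠ u ∧ z ≠ v := by
    intro z
    simp only [hou, Finset.mem_sdiff, Finset.mem_univ, true_and, Finset.mem_insert,
      Finset.mem_singleton]
    tauto
  have hcou : ou.card = n - 2 := by
    rw [hou, Finset.card_sdiff_of_subset (Finset.subset_univ _), Finset.card_pair huv, Finset.card_univ]
  have hdegpos : ∀ z ∈ ou, 1 ≤ T.degree z := by
    intro z _
    obtain ⟨w, hw⟩ := exists_nbr hT.isConnected (by omega) z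
    exact (T.degree_pos_iff_exists_adj z).mpr ⟨w, hw⟩
  have hxu : x ≠ u := hux.ne'
  have hxv : x ≠ v := by rintro rfl; exact hadj hux
  have hnvx : ¬ T.Adj v x := by
    rcases hx x hxu hxv with ⟨_, h⟩ | ⟨_, h⟩
    · exact h
    · exact absurd hux h
  have hxou : x ∈ ou := (hmem x).mpr ⟨hxu, hxv⟩
  have hcard2 : 1 < (T.neighborFinset x).card := hx2
  obtain ⟨y, hymem, hyu⟩ := Finset.exists_mem_ne hcard2 u
  have hxy : T.Adj x y := by rwa [mem_neighborFinset] at hymem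
  have hyx : y ≠ x := hxy.ne'
  have hyv : y ≠ v := by rintro rfl; exact hnvx hxy.symm
  have hnuy : ¬ T.Adj u y := fun h => no_triangle_s12 hT h hux hxy
  have hvy : T.Adj v y := by
    rcases hx y hyu hyv with ⟨h, _⟩ | ⟨h, _⟩
    · exact absurd h hnuy
    · exact h
  have hyou : y ∈ ou := (hmem y).mpr ⟨hyu, hyv⟩
  have hy2 : 2 ≤ T.degree y := by
    have hsub : ({v, x} : Finset V) ⊆ T.neighborFinset y := by
      intro z hz
      simp only [Finset.mem_insert, Finset.mem_singleton] at hz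
      rw [mem_neighborFinset]
      rcases hz with rfl | rfl
      · exact hvy.symm
      · exact hxy.symm
    have := Finset.card_le_card hsub
    rwa [Finset.card_pair (Ne.symm hxv)] at this
  have hpairsub : ({x, y} : Finset V) ⊆ ou := by
    intro z hz
    simp only [Finset.mem_insert, Finset.mem_singleton] at hz
    rcases hz with rfl | rfl
    · exact hxou
    · exact hyou
  have hsum2 : ∑ z ∈ ou \ ({x, y} : Finset V), T.degree z + (T.degree x + T.degree y) = n := by
    rw [← Finset.sum_sdiff hpairsub] at hsum
    rw [Finset.sum_pair (Ne.symm hyx)] at hsum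
    exact hsum
  have hrest_lb : (ou \ ({x, y} : Finset V)).card ≤ ∑ z ∈ ou \ ({x, y} : Finset V), T.degree z := by
    have h1 : ∑ _z ∈ ou \ ({x, y} : Finset V), 1 ≤ ∑ z ∈ ou \ ({x, y} : Finset V), T.degree z :=
      Finset.sum_le_sum (fun i hi => hdegpos i (Finset.mem_sdiff.mp hi).1)
    simpa using h1
  have hcrest : (ou \ ({x, y} : Finset V)).card = n - 4 := by
    rw [Finset.card_sdiff_of_subset hpairsub, Finset.card_pair (Ne.symm hyx), hcou]
    omega
  have hdx : T.degree x = 2 := by omega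
  have hdy : T.degree y = 2 := by omega
  have hrest_eq : ∑ z ∈ ou \ ({x, y} : Finset V), T.degree z = (ou \ ({x, y} : Finset V)).card := by
    omega
  have hleafs := all_one (fun z hz => hdegpos z (Finset.mem_sdiff.mp hz).1) hrest_eq
  have hleaf : ∀ w, w ≠ u → w ≠ v → w ≠ x → w ≠ y → T.degree w = 1 := by
    intro w h1 h2 h3 h4'
    refine hleafs w ?_
    rw [Finset.mem_sdiff]
    refine ⟨(hmem w).mpr ⟨h1, h2⟩, ?_⟩
    simp [h3, h4']
  have hnx : T.neighborFinset x = {u, y} := by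
    symm
    refine Finset.eq_of_subset_of_card_le ?_ ?_
    · intro z hz
      simp only [Finset.mem_insert, Finset.mem_singleton] at hz
      rw [mem_neighborFinset]
      rcases hz with rfl | rfl
      · exact hux.symm
      · exact hxy
    · rw [Finset.card_pair (Ne.symm hyu)]
      exact le_of_eq hdx
  have hny : T.neighborFinset y = {v, x} := by
    symm
    refine Finset.eq_of_subset_of_card_le ?_ ?_
    · intro z hz
      simp only [Finset.mem_insert, Finset.mem_singleton] at hz
      rw [mem_neighborFinset]
      rcases hz with rfl | rfl
      · exact hvy.symm
      · exact hxy.symm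
    · rw [Finset.card_pair (Ne.symm hxv)]
      exact le_of_eq hdy
  set au := ou.filter (fun z => T.Adj u z) with hau
  set av := ou.filter (fun z => T.Adj v z) with hav
  have hdisj : Disjoint au av := by
    rw [Finset.disjoint_left]
    intro z hz1 hz2
    rw [hau, Finset.mem_filter] at hz1
    rw [hav, Finset.mem_filter] at hz2
    obtain ⟨hzu, hzv⟩ := (hmem z).mp hz1.1
    rcases hx z hzu hzv with ⟨_, h⟩ | ⟨_, h⟩
    · exact h hz2.2
    · exact h hz1.2
  have hcup : au ∪ av = ou := by
    ext z
    simp only [hau, hav, Finset.mem_union, Finset.mem_filter]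
    constructor
    · rintro (⟨h, _⟩ | ⟨h, _⟩) <;> exact h
    · intro hz
      obtain ⟨hzu, hzv⟩ := (hmem z).mp hz
      rcases hx z hzu hzv with ⟨h, _⟩ | ⟨h, _⟩
      · exact Or.inl ⟨hz, h⟩
      · exact Or.inr ⟨hz, h⟩
  have hcards : au.card + av.card = n - 2 := by
    rw [← Finset.card_union_of_disjoint hdisj, hcup, hcou]
  have hxau : x ∈ au := by rw [hau, Finset.mem_filter]; exact ⟨hxou, hux⟩
  have hyav : y ∈ av := by rw [hav, Finset.mem_filter]; exact ⟨hyou, hvy⟩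
  have hauprop : ∀ z ∈ au, T.Adj u z ∧ (z ≠ x → (z ≠ u ∧ z ≠ v ∧ z ≠ y ∧ T.degree z = 1)) := by
    intro z hz
    rw [hau, Finset.mem_filter] at hz
    obtain ⟨hzu, hzv⟩ := (hmem z).mp hz.1
    refine ⟨hz.2, fun hzx => ⟨hzu, hzv, ?_, ?_⟩⟩
    · rintro rfl; exact hnuy hz.2
    · refine hleaf z hzu hzv hzx ?_
      rintro rfl; exact hnuy hz.2
  have havprop : ∀ z ∈ av, T.Adj v z ∧ (z ≠ y → (z ≠ u ∧ z ≠ v ∧ z ≠ x ∧ T.degree z = 1)) := by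
    intro z hz
    rw [hav, Finset.mem_filter] at hz
    obtain ⟨hzu, hzv⟩ := (hmem z).mp hz.1
    refine ⟨hz.2, fun hzy => ⟨hzu, hzv, ?_, ?_⟩⟩
    · rintro rfl; exact hnvx hz.2
    · refine hleaf z hzu hzv ?_ hzy
      rintro rfl; exact hnvx hz.2
  by_cases hc1 : 3 ≤ au.card
  · have hce : 1 < (au.erase x).card := by
      rw [Finset.card_erase_of_mem hxau]; omega
    obtain ⟨l1, hl1m, l2, hl2m, hl12⟩ := Finset.one_lt_card.mp hce
    obtain ⟨hl1x, hl1au⟩ := Finset.mem_erase.mp hl1m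
    obtain ⟨hl2x, hl2au⟩ := Finset.mem_erase.mp hl2m
    obtain ⟨hadj1, hrest1⟩ := hauprop l1 hl1au
    obtain ⟨hadj2, hrest2⟩ := hauprop l2 hl2au
    obtain ⟨_, _, _, hd1⟩ := hrest1 hl1x
    constructor
    · refine le_trans ?_ (leafCount_le_max T u)
      have hsub : au.erase x ⊆ univ.filter (fun z => T.Adj u z ∧ T.degree z = 1) := by
        intro z hz
        obtain ⟨hzx, hzau⟩ := Finset.mem_erase.mp hz
        obtain ⟨ha, hr⟩ := hauprop z hzau
        obtain ⟨_, _, _, hd⟩ := hr hzx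
        simp [ha, hd]
      have := Finset.card_le_card hsub
      omega
    · exact EDS_unique hadj hux hxy hvy hnx hny hleaf huv hadj1 hadj2 hl12 hl1x hl2x
  · by_cases hc2 : 3 ≤ av.card
    · have hce : 1 < (av.erase y).card := by
        rw [Finset.card_erase_of_mem hyav]; omega
      obtain ⟨l1, hl1m, l2, hl2m, hl12⟩ := Finset.one_lt_card.mp hce
      obtain ⟨hl1y, hl1av⟩ := Finset.mem_erase.mp hl1m
      obtain ⟨hl2y, hl2av⟩ := Finset.mem_erase.mp hl2m
      obtain ⟨hadj1, hrest1⟩ := havprop l1 hl1av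
      obtain ⟨hadj2, hrest2⟩ := havprop l2 hl2av
      have hleaf' : ∀ w, w ≠ v → w ≠ u → w ≠ y → w ≠ x → T.degree w = 1 :=
        fun w a b c d => hleaf w b a d c
      constructor
      · refine le_trans ?_ (leafCount_le_max T v)
        have hsub : av.erase y ⊆ univ.filter (fun z => T.Adj v z ∧ T.degree z = 1) := by
          intro z hz
          obtain ⟨hzy, hzav⟩ := Finset.mem_erase.mp hz
          obtain ⟨ha, hr⟩ := havprop z hzav
          obtain ⟨_, _, _, hd⟩ := hr hzy
          simp [ha, hd]
        have := Finset.card_le_card hsub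
        omega
      · intro u' v' hB'
        have := EDS_unique (fun h => hadj h.symm) hvy hxy.symm hux hny hnx hleaf'
          huv.symm hadj1 hadj2 hl12 hl1y hl2y u' v' hB'
        rw [this, Finset.pair_comm]
    · -- small cases: path graphs
      exfalso
      have hau1 : 1 ≤ au.card := Finset.card_pos.mpr ⟨x, hxau⟩
      have hav1 : 1 ≤ av.card := Finset.card_pos.mpr ⟨y, hyav⟩
      have hgetau2 : au.card = 2 → ∃ l, l ∈ au ∧ l ≠ x := by
        intro h2
        have hce : (au.erase x).card = 1 := by rw [Finset.card_erase_of_mem hxau]; omega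
        obtain ⟨w, hw⟩ := Finset.card_eq_one.mp hce
        have hwm : w ∈ au.erase x := by rw [hw]; simp
        exact ⟨w, (Finset.mem_erase.mp hwm).2, (Finset.mem_erase.mp hwm).1⟩
      have hgetav2 : av.card = 2 → ∃ m, m ∈ av ∧ m ≠ y := by
        intro h2
        have hce : (av.erase y).card = 1 := by rw [Finset.card_erase_of_mem hyav]; omega
        obtain ⟨w, hw⟩ := Finset.card_eq_one.mp hce
        have hwm : w ∈ av.erase y := by rw [hw]; simp
        exact ⟨w, (Finset.mem_erase.mp hwm).2, (Finset.mem_erase.mp hwm).1⟩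
      have hvx : v ≠ x := Ne.symm hxv
      have hux' : u ≠ x := Ne.symm hxu
      have huy : u ≠ y := Ne.symm hyu
      have hxy' : x ≠ y := Ne.symm hyx
      interval_cases hauc : au.card
      · interval_cases havc : av.card
        · exact h4 (build_iso hT 3 ![u, x, y, v] (inj4 hux' huy huv hxy' hxv hyv)
            (by omega) (adj4 hux hxy hvy.symm))
        · obtain ⟨m, hmav, hmy⟩ := hgetav2 rfl
          obtain ⟨hmadj, hmrest⟩ := havprop m hmav
          obtain ⟨hmu, hmv, hmx, hmd⟩ := hmrest hmy
          exact h5 (build_iso hT 4 ![u, x, y, v, m]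
            (inj5 hux' huy huv (Ne.symm hmu) hxy' hxv (Ne.symm hmx) hyv (Ne.symm hmy)
              (Ne.symm hmv))
            (by omega) (adj5 hux hxy hvy.symm hmadj))
      · obtain ⟨l, hlau, hlx⟩ := hgetau2 rfl
        obtain ⟨hladj, hlrest⟩ := hauprop l hlau
        obtain ⟨hlu, hlv, hly, hld⟩ := hlrest hlx
        interval_cases havc : av.card
        · exact h5 (build_iso hT 4 ![l, u, x, y, v]
            (inj5 hlu hlx hly hlv hux' huy huv hxy' hxv hyv)
            (by omega) (adj5 hladj.symm hux hxy hvy.symm))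
        · obtain ⟨m, hmav, hmy⟩ := hgetav2 rfl
          obtain ⟨hmadj, hmrest⟩ := havprop m hmav
          obtain ⟨hmu, hmv, hmx, hmd⟩ := hmrest hmy
          have hlm : l ≠ m := by
            rintro rfl
            exact (Finset.disjoint_left.mp hdisj hlau) hmav
          exact h6 (build_iso hT 5 ![l, u, x, y, v, m]
            (inj6 hlu hlx hly hlv hlm hux' huy huv (Ne.symm hmu) hxy' hxv (Ne.symm hmx)
              hyv (Ne.symm hmy) (Ne.symm hmv))
            (by omega) (adj6 hladj.symm hux hxy hvy.symm hmadj))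

lemma deg_split [Fintype V] (T : SimpleGraph V) {u v : V} (huv : u ≠ v) :
    T.degree u = ((univ \ ({u, v} : Finset V)).filter (fun z => T.Adj u z)).card
      + (if T.Adj u v then 1 else 0) := by
  classical
  have h1 : T.neighborFinset u =
      ((univ \ ({u, v} : Finset V)).filter (fun z => T.Adj u z))
        ∪ (({u, v} : Finset V).filter (fun z => T.Adj u z)) := by
    ext z
    simp only [mem_neighborFinset, Finset.mem_union, Finset.mem_filter, Finset.mem_sdiff,
      Finset.mem_univ, true_and]
    tauto
  have h2 : (({u, v} : Finset V).filter (fun z => T.Adj u z)) =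
      if T.Adj u v then {v} else ∅ := by
    split_ifs with h
    · ext z
      simp only [Finset.mem_filter, Finset.mem_insert, Finset.mem_singleton]
      constructor
      · rintro ⟨rfl | rfl, ha⟩
        · exact absurd ha (T.irrefl)
        · rfl
      · rintro rfl; exact ⟨Or.inr rfl, h⟩
    · ext z
      simp only [Finset.mem_filter, Finset.mem_insert, Finset.mem_singleton,
        Finset.notMem_empty, iff_false, not_and]
      rintro (rfl | rfl)
      · exact fun ha => absurd ha (T.irrefl)
      · exact h
  have hdisj : Disjoint ((univ \ ({u, v} : Finset V)).filter (fun z => T.Adj u z))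
      (({u, v} : Finset V).filter (fun z => T.Adj u z)) :=
    Finset.disjoint_filter_filter Finset.sdiff_disjoint
  rw [SimpleGraph.degree, h1, Finset.card_union_of_disjoint hdisj, h2]
  split_ifs <;> simp

lemma TB_main [Fintype V] {T : SimpleGraph V} (hT : T.IsTree) (hn : 4 ≤ Fintype.card V)
    (hstar : ¬ IsStar T)
    (h4 : ¬ Nonempty (T ≃g pathGraph 4)) (h5 : ¬ Nonempty (T ≃g pathGraph 5))
    (h6 : ¬ Nonempty (T ≃g pathGraph 6))
    {u v : V} (hB : TB T u v) :
    2 ≤ maxLeafCount T ∧ ∀ u' v', TB T u' v' → ({u', v'} : Finset V) = {u, v} := by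
  obtain ⟨huv, hx⟩ := hB
  set n := Fintype.card V with hn'
  set ou := univ \ ({u, v} : Finset V) with hou
  have hmem : ∀ z : V, z ∈ ou ↔ z ≠ u ∧ z ≠ v := by
    intro z
    simp only [hou, Finset.mem_sdiff, Finset.mem_univ, true_and, Finset.mem_insert,
      Finset.mem_singleton]
    tauto
  have hcou : ou.card = n - 2 := by
    rw [hou, Finset.card_sdiff_of_subset (Finset.subset_univ _), Finset.card_pair huv, Finset.card_univ]
  have hdegpos : ∀ z ∈ ou, 1 ≤ T.degree z := by
    intro z _
    obtain ⟨w, hw⟩ := exists_nbr hT.isConnected (by omega) z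
    exact (T.degree_pos_iff_exists_adj z).mpr ⟨w, hw⟩
  set au := ou.filter (fun z => T.Adj u z) with hau
  set av := ou.filter (fun z => T.Adj v z) with hav
  have hdisj : Disjoint au av := by
    rw [Finset.disjoint_left]
    intro z hz1 hz2
    rw [hau, Finset.mem_filter] at hz1
    rw [hav, Finset.mem_filter] at hz2
    obtain ⟨hzu, hzv⟩ := (hmem z).mp hz1.1
    rcases hx z hzu hzv with ⟨_, h⟩ | ⟨_, h⟩
    · exact h hz2.2
    · exact h hz1.2
  have hcup : au ∪ av = ou := by
    ext z
    simp only [hau, hav, Finset.mem_union, Finset.mem_filter]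
    constructor
    · rintro (⟨h, _⟩ | ⟨h, _⟩) <;> exact h
    · intro hz
      obtain ⟨hzu, hzv⟩ := (hmem z).mp hz
      rcases hx z hzu hzv with ⟨h, _⟩ | ⟨h, _⟩
      · exact Or.inl ⟨hz, h⟩
      · exact Or.inr ⟨hz, h⟩
  have hcards : au.card + av.card = n - 2 := by
    rw [← Finset.card_union_of_disjoint hdisj, hcup, hcou]
  -- degree sum computations
  have hdegu : T.degree u = au.card + (if T.Adj u v then 1 else 0) := deg_split T huv
  have hdegv : T.degree v = av.card + (if T.Adj u v then 1 else 0) := by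
    have h := deg_split T huv.symm
    rw [Finset.pair_comm v u] at h
    rw [h]
    congr 1
    by_cases hadj2 : T.Adj u v <;> simp [hadj2, T.adj_comm v u]
  have hsumuniv : ∑ z ∈ univ, T.degree z = 2 * (n - 1) := by
    rw [T.sum_degrees_eq_twice_card_edges]
    have := hT.card_edgeFinset
    omega
  have hsumou : ∑ z ∈ ou, T.degree z + (T.degree u + T.degree v) = 2 * (n - 1) := by
    rw [← hsumuniv, hou, ← Finset.sum_sdiff (Finset.subset_univ ({u, v} : Finset V)),
      Finset.sum_pair huv]
  by_cases hadj : T.Adj u v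
  · -- double star case
    simp only [hadj, if_true] at hdegu hdegv
    have hsum1 : ∑ z ∈ ou, T.degree z = ou.card := by
      rw [hcou]; omega
    have hdeg1 := all_one hdegpos hsum1
    have hdeg : ∀ z, z ≠ u → z ≠ v → T.degree z = 1 := fun z h1 h2 =>
      hdeg1 z ((hmem z).mpr ⟨h1, h2⟩)
    -- both sides nonempty (else star)
    have hauprop : ∀ z ∈ au, T.Adj u z ∧ z ≠ u ∧ z ≠ v ∧ T.degree z = 1 := by
      intro z hz
      rw [hau, Finset.mem_filter] at hz
      obtain ⟨hzu, hzv⟩ := (hmem z).mp hz.1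
      exact ⟨hz.2, hzu, hzv, hdeg z hzu hzv⟩
    have havprop : ∀ z ∈ av, T.Adj v z ∧ z ≠ u ∧ z ≠ v ∧ T.degree z = 1 := by
      intro z hz
      rw [hav, Finset.mem_filter] at hz
      obtain ⟨hzu, hzv⟩ := (hmem z).mp hz.1
      exact ⟨hz.2, hzu, hzv, hdeg z hzu hzv⟩
    have hstar_aux : ∀ (a b : V), av = ∅ → T.Adj a b → a = u ∨ b = u := by
      intro a b hem hab
      by_contra hcon
      push_neg at hcon
      obtain ⟨hav', hbu⟩ := hcon
      have hbav : ∀ z, z ≠ u → z ≠ v → T.Adj u z := by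
        intro z h1 h2
        have : z ∈ au ∪ av := by rw [hcup]; exact (hmem z).mpr ⟨h1, h2⟩
        rw [hem, Finset.union_empty] at this
        exact ((hauprop z this).1)
      rcases em (a = v) with hav2 | hav2
      · have hab' : T.Adj v b := hav2 ▸ hab
        have hbv : b ≠ v := hab'.ne'
        rcases hx b hbu hbv with ⟨_, h⟩ | ⟨_, h⟩
        · exact h hab'
        · exact h (hbav b hbu hbv)
      · rcases em (b = v) with hbv2 | hbv2
        · have hab' : T.Adj a v := hbv2 ▸ hab
          rcases hx a hav' hav2 with ⟨_, h⟩ | ⟨_, h⟩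
          · exact h hab'.symm
          · exact h (hbav a hav' hav2)
        · have hda : T.degree a = 1 := hdeg a hav' hav2
          exact hbu (unique_nbr hda (hbav a hav' hav2).symm hab).symm
    have hstar_aux2 : ∀ (a b : V), au = ∅ → T.Adj a b → a = v ∨ b = v := by
      intro a b hem hab
      by_contra hcon
      push_neg at hcon
      obtain ⟨hav', hbu⟩ := hcon
      have hbav : ∀ z, z ≠ u → z ≠ v → T.Adj v z := by
        intro z h1 h2
        have hzm : z ∈ au ∪ av := by rw [hcup]; exact (hmem z).mpr ⟨h1, h2⟩
        rw [hem, Finset.empty_union] at hzm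
        exact ((havprop z hzm).1)
      rcases em (a = u) with hav2 | hav2
      · have hab' : T.Adj u b := hav2 ▸ hab
        have hbv : b ≠ u := hab'.ne'
        rcases hx b hbv hbu with ⟨_, h⟩ | ⟨_, h⟩
        · exact h (hbav b hbv hbu)
        · exact h hab'
      · rcases em (b = u) with hbv2 | hbv2
        · have hab' : T.Adj a u := hbv2 ▸ hab
          rcases hx a hav2 hav' with ⟨_, h⟩ | ⟨_, h⟩
          · exact h (hbav a hav2 hav')
          · exact h hab'.symm
        · have hda : T.degree a = 1 := hdeg a hav2 hav'
          exact hbu (unique_nbr hda (hbav a hav2 hav').symm hab).symm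
    have havne : av.Nonempty := by
      rcases Finset.eq_empty_or_nonempty av with hem | hne
      · exact absurd ⟨u, fun a b hab => hstar_aux a b hem hab⟩ hstar
      · exact hne
    have haune : au.Nonempty := by
      rcases Finset.eq_empty_or_nonempty au with hem | hne
      · exact absurd ⟨v, fun a b hab => hstar_aux2 a b hem hab⟩ hstar
      · exact hne
    obtain ⟨mv, hmv⟩ := havne
    obtain ⟨lu, hlu⟩ := haune
    obtain ⟨hmadj, hmu, hmv2, hmd⟩ := havprop mv hmv
    obtain ⟨hladj, hlu2, hlv2, hld⟩ := hauprop lu hlu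
    have hlm : lu ≠ mv := by
      rintro rfl
      exact (Finset.disjoint_left.mp hdisj hlu) hmv
    have hau1 : 1 ≤ au.card := Finset.card_pos.mpr ⟨lu, hlu⟩
    have hav1 : 1 ≤ av.card := Finset.card_pos.mpr ⟨mv, hmv⟩
    by_cases hn5 : 5 ≤ n
    · constructor
      · rcases (by omega : 2 ≤ au.card ∨ 2 ≤ av.card) with hc | hc
        · refine le_trans ?_ (leafCount_le_max T u)
          refine le_trans hc (Finset.card_le_card ?_)
          intro z hz
          obtain ⟨ha, _, _, hd⟩ := hauprop z hz
          simp [ha, hd]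
        · refine le_trans ?_ (leafCount_le_max T v)
          refine le_trans hc (Finset.card_le_card ?_)
          intro z hz
          obtain ⟨ha, _, _, hd⟩ := havprop z hz
          simp [ha, hd]
      · intro u' v' hB'
        obtain ⟨hne', hx'⟩ := hB'
        by_cases cu' : u' = u ∨ u' = v
        · by_cases cv' : v' = u ∨ v' = v
          · apply Finset.eq_of_subset_of_card_le
            · intro z hz
              simp only [Finset.mem_insert, Finset.mem_singleton] at hz ⊢
              rcases hz with rfl | rfl
              · rcases cu' with h | h <;> simp [h]
              · rcases cv' with h | h <;> simp [h]
            · rw [Finset.card_pair huv, Finset.card_pair hne']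
          · push_neg at cv'
            exfalso
            rcases cu' with hc | hc
            · have hB2 : TB T u v' := by rw [← hc]; exact ⟨hne', hx'⟩
              exact DS_aux hadj hdeg hmadj hmu cv'.1 cv'.2 hB2
            · have hB2 : TB T v v' := by rw [← hc]; exact ⟨hne', hx'⟩
              exact DS_aux hadj.symm (fun z h1 h2 => hdeg z h2 h1) hladj hlv2 cv'.2 cv'.1 hB2
        · push_neg at cu'
          by_cases cv' : v' = u ∨ v' = v
          · exfalso
            have hBs : TB T v' u' := TB.symm ⟨hne', hx'⟩
            rcases cv' with hc | hc
            · have hB2 : TB T u u' := by rw [← hc]; exact hBs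
              exact DS_aux hadj hdeg hmadj hmu cu'.1 cu'.2 hB2
            · have hB2 : TB T v u' := by rw [← hc]; exact hBs
              exact DS_aux hadj.symm (fun z h1 h2 => hdeg z h2 h1) hladj hlv2 cu'.2 cu'.1 hB2
          · push_neg at cv'
            exfalso
            obtain ⟨w, hwou, hwu', hwv'⟩ : ∃ w, w ∈ ou ∧ w ≠ u' ∧ w ≠ v' := by
              have hsd : 1 ≤ (ou \ ({u', v'} : Finset V)).card := by
                have h1 := Finset.le_card_sdiff ({u', v'} : Finset V) ou
                have h2 : ({u', v'} : Finset V).card ≤ 2 :=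
                  (Finset.card_insert_le _ _).trans (by simp)
                omega
              obtain ⟨w, hwm⟩ := Finset.card_pos.mp hsd
              rw [Finset.mem_sdiff, Finset.mem_insert, Finset.mem_singleton] at hwm
              push_neg at hwm
              exact ⟨w, hwm.1, hwm.2.1, hwm.2.2⟩
            obtain ⟨hwu, hwv⟩ := (hmem w).mp hwou
            have hdw : T.degree w = 1 := hdeg w hwu hwv
            have hcadj : T.Adj w u ∨ T.Adj w v := by
              rcases hx w hwu hwv with ⟨h, _⟩ | ⟨h, _⟩
              · exact Or.inl h.symm
              · exact Or.inr h.symm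
            rcases hx' w hwu' hwv' with ⟨h, _⟩ | ⟨h, _⟩
            · rcases hcadj with hc | hc
              · exact cu'.1 (unique_nbr hdw h.symm hc)
              · exact cu'.2 (unique_nbr hdw h.symm hc)
            · rcases hcadj with hc | hc
              · exact cv'.1 (unique_nbr hdw h.symm hc)
              · exact cv'.2 (unique_nbr hdw h.symm hc)
    · exact absurd (build_iso hT 3 ![lu, u, v, mv]
        (inj4 hlu2 hlv2 hlm huv (Ne.symm hmu) (Ne.symm hmv2))
        (by omega) (adj4 hladj.symm hadj hmadj)) h4
  · -- extended double star case
    simp only [hadj, if_false] at hdegu hdegv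
    have hsum_ou : ∑ z ∈ ou, T.degree z = n := by omega
    obtain ⟨z, hzou, hz2⟩ : ∃ z ∈ ou, 2 ≤ T.degree z := by
      by_contra hc
      push_neg at hc
      have hle : ∑ z ∈ ou, T.degree z ≤ ∑ _z ∈ ou, 1 :=
        Finset.sum_le_sum (fun i hi => by have := hc i hi; omega)
      simp only [Finset.sum_const, smul_eq_mul, mul_one] at hle
      omega
    obtain ⟨hzu, hzv⟩ := (hmem z).mp hzou
    rcases hx z hzu hzv with ⟨h, _⟩ | ⟨h, _⟩
    · exact EDS_branch hT hn h4 h5 h6 ⟨huv, hx⟩ hadj h hz2 hsum_ou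
    · have hres := EDS_branch hT hn h4 h5 h6 (TB.symm ⟨huv, hx⟩) (fun hh => hadj hh.symm) h hz2
        (by rw [Finset.pair_comm v u]; exact hsum_ou)
      exact ⟨hres.1, fun u' v' hB' => by rw [hres.2 u' v' hB', Finset.pair_comm]⟩

lemma exists_leaf [Fintype V] {T : SimpleGraph V} (hT : T.IsTree) (hn : 4 ≤ Fintype.card V) :
    1 ≤ maxLeafCount T := by
  classical
  have hsum : ∑ z ∈ univ, T.degree z = 2 * (Fintype.card V - 1) := by
    rw [T.sum_degrees_eq_twice_card_edges]
    have := hT.card_edgeFinset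
    omega
  obtain ⟨z, hz⟩ : ∃ z : V, T.degree z ≤ 1 := by
    by_contra hc
    push_neg at hc
    have hle : ∑ _z ∈ (univ : Finset V), 2 ≤ ∑ z ∈ univ, T.degree z :=
      Finset.sum_le_sum (fun i _ => hc i)
    simp only [Finset.sum_const, smul_eq_mul, mul_one, Finset.card_univ] at hle
    omega
  obtain ⟨w, hw⟩ := exists_nbr hT.isConnected (by omega) z
  have hdz : T.degree z = 1 := by
    have := (T.degree_pos_iff_exists_adj z).mpr ⟨w, hw⟩
    omega
  refine le_trans ?_ (leafCount_le_max T w)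
  have : z ∈ filter (fun z => T.Adj w z ∧ T.degree z = 1) univ := by simp [hw.symm, hdz]
  exact Finset.card_pos.mpr ⟨z, this⟩

lemma no_leaf_edge [Fintype V] {T : SimpleGraph V} (hT : T.IsTree) (hn : 4 ≤ Fintype.card V)
    {a b : V} (hab : T.Adj a b) (hda : T.degree a = 1) (hdb : T.degree b = 1) : False := by
  have hclosed : ∀ z, z ∈ ({a, b} : Set V) := by
    refine closed_eq_univ hT.isConnected ?_ (Set.mem_insert a {b})
    intro c hc d hd
    rcases hc with hc | hc
    · rw [hc] at hd
      have : d = b := unique_nbr hda hd hab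
      right; exact this
    · rw [Set.mem_singleton_iff] at hc
      rw [hc] at hd
      have : d = a := unique_nbr hdb hd hab.symm
      left; exact this
  have hsub : (univ : Finset V) ⊆ {a, b} := by
    intro z _
    have := hclosed z
    simpa using this
  have := Finset.card_le_card hsub
  rw [Finset.card_univ] at this
  have h2 : ({a, b} : Finset V).card ≤ 2 := (Finset.card_insert_le _ _).trans (by simp)
  omega

lemma two_nonleaves [Fintype V] {T : SimpleGraph V} (hT : T.IsTree) (hn : 4 ≤ Fintype.card V)
    (hstar : ¬ IsStar T) :
    2 ≤ (univ.filter (fun z => T.degree z ≠ 1)).card := by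
  classical
  set NL := univ.filter (fun z => T.degree z ≠ 1) with hNL
  by_contra hc
  push_neg at hc
  interval_cases hn2 : NL.card
  · -- all leaves
    have hall : ∀ z : V, T.degree z = 1 := by
      intro z
      by_contra h
      have : z ∈ NL := by rw [hNL]; simp [h]
      rw [Finset.card_eq_zero.mp hn2] at this
      simp at this
    obtain ⟨a⟩ := (Fintype.card_pos_iff (α := V)).mp (by omega)
    obtain ⟨b, hb⟩ := exists_nbr hT.isConnected (by omega) a
    exact no_leaf_edge hT hn hb (hall a) (hall b)
  · obtain ⟨c, hc1⟩ := Finset.card_eq_one.mp hn2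
    refine hstar ⟨c, ?_⟩
    intro a b hab
    by_contra hcon
    push_neg at hcon
    have hda : T.degree a = 1 := by
      by_contra h
      have : a ∈ NL := by rw [hNL]; simp [h]
      rw [hc1] at this
      simp at this
      exact hcon.1 this
    have hdb : T.degree b = 1 := by
      by_contra h
      have : b ∈ NL := by rw [hNL]; simp [h]
      rw [hc1] at this
      simp at this
      exact hcon.2 this
    exact no_leaf_edge hT hn hab hda hdb

lemma sum_leafcounts [Fintype V] (T : SimpleGraph V) :
    ∑ w ∈ univ, (univ.filter (fun z => T.Adj w z ∧ T.degree z = 1)).card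
      = (univ.filter (fun z => T.degree z = 1)).card := by
  classical
  have h1 : ∀ w : V, (univ.filter (fun z => T.Adj w z ∧ T.degree z = 1)).card
      = ∑ z ∈ univ, (if T.Adj w z ∧ T.degree z = 1 then 1 else 0) := by
    intro w
    rw [Finset.card_filter]
  simp only [h1]
  rw [Finset.sum_comm]
  have h2 : ∀ z : V, ∑ w ∈ univ, (if T.Adj w z ∧ T.degree z = 1 then 1 else 0)
      = if T.degree z = 1 then 1 else 0 := by
    intro z
    by_cases hdz : T.degree z = 1
    · simp only [hdz, and_true, if_true]
      have : ∑ w ∈ univ, (if T.Adj w z then 1 else 0)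
          = (univ.filter (fun w => T.Adj w z)).card := by
        rw [Finset.card_filter]
      rw [this]
      have : univ.filter (fun w => T.Adj w z) = T.neighborFinset z := by
        ext w
        simp [mem_neighborFinset, T.adj_comm]
      rw [this]
      exact hdz
    · simp [hdz]
  simp only [h2]
  rw [Finset.card_filter]

lemma two_mul_choose_two (m : ℕ) : 2 * (m.choose 2) = m * (m - 1) := by
  rcases m with _ | k
  · simp
  · rw [Nat.choose_two_right]
    have h2 : 2 ∣ (k + 1) * (k + 1 - 1) := by
      simp only [Nat.add_sub_cancel]
      rcases Nat.even_or_odd k with h | h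
      · exact Dvd.dvd.mul_left h.two_dvd _
      · exact Dvd.dvd.mul_right (Even.two_dvd (by exact h.add_one)) _
    rw [Nat.mul_div_cancel' h2]

/-- a tree of order `n ≥ 4` which is not a star nor a path on 4, 5 or 6 vertices
has at least `n (n - D(T)) / 2` odd sets. -/
theorem numOddSets_lower_bound [Fintype V] (T : SimpleGraph V) (hT : T.IsTree)
    (hn : 4 ≤ Fintype.card V) (hstar : ¬ IsStar T)
    (h4 : ¬ Nonempty (T ≃g pathGraph 4)) (h5 : ¬ Nonempty (T ≃g pathGraph 5))
    (h6 : ¬ Nonempty (T ≃g pathGraph 6)) :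
    (Fintype.card V : ℝ) * ((Fintype.card V : ℝ) - maxLeafCount T) / 2 ≤ numOddSets T := by
  classical
  set n := Fintype.card V with hn'
  set D := maxLeafCount T with hD
  set P2 := (univ : Finset V).powersetCard 2 with hP2
  set good := P2.filter (fun X => IsOddSet T X) with hgood
  set bad := P2.filter (fun X => ¬ IsOddSet T X) with hbad
  have hmemP2 : ∀ X : Finset V, X ∈ P2 ↔ X.card = 2 := by
    intro X
    rw [hP2, Finset.mem_powersetCard_univ]
  have hnum : numOddSets T = good.card := by
    rw [numOddSets, Nat.card_eq_fintype_card, Fintype.card_subtype]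
    congr 1
    ext X
    simp only [hgood, Finset.mem_filter, hP2, Finset.mem_powersetCard_univ, Finset.mem_univ,
      true_and]
    constructor
    · intro h
      exact ⟨h.1, h⟩
    · rintro ⟨_, h⟩
      exact h
  have hPcard : P2.card = n.choose 2 := by
    rw [hP2, Finset.card_powersetCard, Finset.card_univ]
  have hsplit : good.card + bad.card = n.choose 2 := by
    rw [hgood, hbad, Finset.card_filter_add_card_filter_not, hPcard]
  set LS := fun w => univ.filter (fun z => T.Adj w z ∧ T.degree z = 1) with hLS
  set I := P2.filter (fun X => ∃ w, X ⊆ LS w) with hI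
  set Bt := P2.filter (fun X => ∃ a b, X = ({a, b} : Finset V) ∧ TB T a b) with hBt
  have hbadsub : bad ⊆ I ∪ Bt := by
    intro X hX
    rw [hbad, Finset.mem_filter] at hX
    obtain ⟨hXP, hXodd⟩ := hX
    have hX2 : X.card = 2 := (hmemP2 X).mp hXP
    obtain ⟨a, b, hab, rfl⟩ := Finset.card_eq_two.mp hX2
    rcases bad_classify hT hn hab hXodd with ⟨hda, hdb, w, hwa, hwb⟩ | hR
    · refine Finset.mem_union_left _ ?_
      rw [hI, Finset.mem_filter]
      refine ⟨hXP, w, ?_⟩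
      intro z hz
      simp only [Finset.mem_insert, Finset.mem_singleton] at hz
      rw [hLS]
      simp only [Finset.mem_filter, Finset.mem_univ, true_and]
      rcases hz with rfl | rfl
      · exact ⟨hwa, hda⟩
      · exact ⟨hwb, hdb⟩
    · refine Finset.mem_union_right _ ?_
      rw [hBt, Finset.mem_filter]
      exact ⟨hXP, a, b, rfl, hab, hR⟩
  have hIbound : 2 * I.card ≤ (n - 2) * (D - 1) := by
    have hsub : I ⊆ univ.biUnion (fun w => (LS w).powersetCard 2) := by
      intro X hX
      rw [hI, Finset.mem_filter] at hX
      obtain ⟨hXP, w, hw⟩ := hX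
      rw [Finset.mem_biUnion]
      exact ⟨w, Finset.mem_univ w, Finset.mem_powersetCard.mpr ⟨hw, (hmemP2 X).mp hXP⟩⟩
    have h1 : I.card ≤ ∑ w ∈ univ, ((LS w).powersetCard 2).card :=
      le_trans (Finset.card_le_card hsub) Finset.card_biUnion_le
    have h2 : ∀ w, 2 * ((LS w).powersetCard 2).card ≤ (LS w).card * (D - 1) := by
      intro w
      rw [Finset.card_powersetCard, two_mul_choose_two]
      have hle : (LS w).card ≤ D := leafCount_le_max T w
      exact Nat.mul_le_mul le_rfl (by omega)
    have h3 : 2 * I.card ≤ ∑ w ∈ univ, (LS w).card * (D - 1) := by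
      calc 2 * I.card ≤ 2 * ∑ w ∈ univ, ((LS w).powersetCard 2).card := by omega
        _ = ∑ w ∈ univ, 2 * ((LS w).powersetCard 2).card := Finset.mul_sum _ _ _
        _ ≤ ∑ w ∈ univ, (LS w).card * (D - 1) := Finset.sum_le_sum (fun w _ => h2 w)
    have h4' : ∑ w ∈ univ, (LS w).card * (D - 1)
        = (univ.filter (fun z => T.degree z = 1)).card * (D - 1) := by
      rw [← Finset.sum_mul]
      congr 1
      exact sum_leafcounts T
    have h5' : (univ.filter (fun z => T.degree z = 1)).card ≤ n - 2 := by
      have h2nl := two_nonleaves hT hn hstar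
      have hfil := Finset.card_filter_add_card_filter_not
        (s := (univ : Finset V)) (p := fun z => T.degree z = 1)
      have hNLeq : (univ.filter (fun z => ¬ T.degree z = 1)).card
          = (univ.filter (fun z => T.degree z ≠ 1)).card := rfl
      rw [Finset.card_univ] at hfil
      omega
    have h6' : (univ.filter (fun z => T.degree z = 1)).card * (D - 1) ≤ (n - 2) * (D - 1) :=
      Nat.mul_le_mul h5' le_rfl
    omega
  have hD1 : 1 ≤ D := exists_leaf hT hn
  have hBtbound : 2 * Bt.card ≤ 2 * (D - 1) := by
    rcases Finset.eq_empty_or_nonempty Bt with hem | ⟨X, hX⟩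
    · simp [hem]
    · rw [hBt, Finset.mem_filter] at hX
      obtain ⟨hXP, a, b, hXab, hTB⟩ := hX
      obtain ⟨hD2, huniq⟩ := TB_main hT hn hstar h4 h5 h6 hTB
      have hcard1 : Bt.card ≤ 1 := by
        rw [Finset.card_le_one]
        intro Y hY Z hZ
        rw [hBt, Finset.mem_filter] at hY hZ
        obtain ⟨_, a1, b1, hY1, hT1⟩ := hY
        obtain ⟨_, a2, b2, hZ1, hT2⟩ := hZ
        rw [hY1, hZ1, huniq a1 b1 hT1, huniq a2 b2 hT2]
      omega
  have hkey : 2 * bad.card ≤ n * (D - 1) := by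
    have hb : bad.card ≤ I.card + Bt.card :=
      le_trans (Finset.card_le_card hbadsub) (Finset.card_union_le _ _)
    have hn2 : (n - 2) * (D - 1) + 2 * (D - 1) = n * (D - 1) := by
      have hadd : (n - 2) + 2 = n := by omega
      rw [← Nat.add_mul, hadd]
    omega
  rw [hnum]
  have hgb : (good.card : ℝ) + (bad.card : ℝ) = ((n.choose 2 : ℕ) : ℝ) := by
    exact_mod_cast congrArg (fun m : ℕ => (m : ℝ)) hsplit
  have hC : ((n.choose 2 : ℕ) : ℝ) = (n : ℝ) * ((n : ℝ) - 1) / 2 := Nat.cast_choose_two (K := ℝ) n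
  have hbadR : 2 * (bad.card : ℝ) ≤ (n : ℝ) * ((D : ℝ) - 1) := by
    have hcast : ((n * (D - 1) : ℕ) : ℝ) = (n : ℝ) * ((D : ℝ) - 1) := by
      rw [Nat.cast_mul, Nat.cast_sub hD1]
      norm_num
    calc (2 : ℝ) * (bad.card : ℝ) = ((2 * bad.card : ℕ) : ℝ) := by push_cast; ring
      _ ≤ ((n * (D - 1) : ℕ) : ℝ) := by exact_mod_cast hkey
      _ = _ := hcast
  have hexp : (n : ℝ) * ((n : ℝ) - (D : ℝ)) / 2
      = (n : ℝ) * ((n : ℝ) - 1) / 2 - (n : ℝ) * ((D : ℝ) - 1) / 2 := by ring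
  rw [hexp]
  linarith
end

section
/- Let T be a tree of order n ≥ 4 in which every pair of distinct vertices that is not an odd set consists of two leaves sharing a common neighbor. Then every vertex w of T satisfies λ(w) ≥ n − D(T), where λ(w) is the number of vertices u ≠ w such that {w,u} is an odd set, and consequently the number of odd sets of T is at least n(n − D(T))/2. -/
open SimpleGraph Finset
open scoped Classical

variable {V : Type*}

private lemma exists_leaf_aux [Fintype V] (T : SimpleGraph V) (hT : T.IsTree)
    (hn : 2 ≤ Fintype.card V) : ∃ v : V, degree' T v = 1 := by
  have hdeg : ∀ v : V, degree' T v = T.degree v := fun v => by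
    rw [degree', Nat.card_eq_fintype_card]; exact T.card_neighborSet_eq_degree v
  have hpos : ∀ v : V, 1 ≤ T.degree v := by
    intro v
    rw [Nat.one_le_iff_ne_zero, ← Nat.pos_iff_ne_zero, degree_pos_iff_exists_adj]
    obtain ⟨u, hu⟩ := Fintype.exists_ne_of_one_lt_card (by omega) v
    obtain ⟨p⟩ := hT.isConnected.preconnected v u
    cases p with
    | nil => exact absurd rfl hu.symm
    | cons h _ => exact ⟨_, h⟩
  have hsum : ∑ v, T.degree v = 2 * (Fintype.card V - 1) := by
    have he := hT.card_edgeFinset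
    rw [T.sum_degrees_eq_twice_card_edges]
    omega
  by_contra hc
  push_neg at hc
  have h2 : ∀ v : V, 2 ≤ T.degree v := by
    intro v
    have h3 := hpos v
    have h4 := hc v
    rw [hdeg v] at h4
    omega
  have : 2 * Fintype.card V ≤ ∑ v, T.degree v := by
    calc 2 * Fintype.card V = ∑ _v : V, 2 := by simp [mul_comm]
    _ ≤ ∑ v, T.degree v := Finset.sum_le_sum fun v _ => h2 v
  omega

/-- if every non-odd pair of distinct vertices of `T` consists of two leaves
with a common neighbor, then `λ(w) ≥ n - D(T)` for every vertex `w`, and consequently the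
number of odd sets of `T` is at least `n (n - D(T)) / 2`. -/
theorem lambda_degree_lower_bound [Fintype V] (T : SimpleGraph V) (hT : T.IsTree)
    (hn : 4 ≤ Fintype.card V)
    (h : ∀ u v : V, u ≠ v → ¬ IsOddSet T {u, v} →
      degree' T u = 1 ∧ degree' T v = 1 ∧ ∃ w, T.Adj u w ∧ T.Adj v w) :
    (∀ w : V, (Fintype.card V : ℝ) - maxLeafCount T ≤
        Nat.card {u : V // u ≠ w ∧ IsOddSet T {w, u}}) ∧
    (Fintype.card V : ℝ) * ((Fintype.card V : ℝ) - maxLeafCount T) / 2 ≤ numOddSets T := by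
  classical
  set n := Fintype.card V with hn_def
  set D := maxLeafCount T with hD_def
  -- D ≥ 1
  have hD1 : 1 ≤ D := by
    obtain ⟨v, hv⟩ := exists_leaf_aux T hT (by omega)
    have hvpos : 0 < Nat.card {x : V // T.Adj v x} := by rw [← degree', hv]; norm_num
    have : Nonempty {x : V // T.Adj v x} := by
      rcases Nat.card_pos_iff.mp hvpos with ⟨h1, _⟩; exact h1
    obtain ⟨c, hc⟩ := this
    have h1 : 1 ≤ Nat.card {u : V // T.Adj c u ∧ degree' T u = 1} :=
      Nat.one_le_iff_ne_zero.mpr (Nat.card_pos_iff.mpr ⟨⟨⟨v, hc.symm, hv⟩⟩, inferInstance⟩).ne'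
    have hle : Nat.card {u : V // T.Adj c u ∧ degree' T u = 1} ≤ maxLeafCount T :=
      Finset.le_sup (f := fun w => Nat.card {u : V // T.Adj w u ∧ degree' T u = 1})
        (Finset.mem_univ c)
    exact le_trans h1 hle
  -- the finsets
  set A : V → Finset V := fun w => Finset.univ.filter (fun u => u ≠ w ∧ IsOddSet T {w, u})
    with hA_def
  have hcardA : ∀ w : V, Nat.card {u : V // u ≠ w ∧ IsOddSet T {w, u}} = (A w).card := by
    intro w
    rw [Nat.card_eq_fintype_card, Fintype.card_subtype]
  set B : V → Finset V := fun w => Finset.univ.filter (fun u => u ≠ w ∧ ¬ IsOddSet T {w, u})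
    with hB_def
  have hAB : ∀ w : V, (A w).card + (B w).card = n - 1 := by
    intro w
    have hdisj : Disjoint (A w) (B w) := by
      rw [Finset.disjoint_left]
      intro u hu hu'
      simp only [hA_def, hB_def, Finset.mem_filter] at hu hu'
      exact hu'.2.2 hu.2.2
    have hunion : A w ∪ B w = Finset.univ.erase w := by
      ext u
      simp only [hA_def, hB_def, Finset.mem_union, Finset.mem_filter, Finset.mem_erase,
        Finset.mem_univ, and_true, true_and]
      tauto
    rw [← Finset.card_union_of_disjoint hdisj, hunion, Finset.card_erase_of_mem (Finset.mem_univ w),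
      Finset.card_univ]
  have hn1 : 1 ≤ n := by omega
  -- key per-vertex bound
  have key : ∀ w : V, (n : ℝ) - D ≤ (A w).card := by
    intro w
    rcases Finset.eq_empty_or_nonempty (B w) with hB | hB
    · have : (A w).card = n - 1 := by
        have := hAB w; rw [hB] at this; simpa using this
      rw [this]
      have : ((n - 1 : ℕ) : ℝ) = (n : ℝ) - 1 := by
        push_cast [Nat.cast_sub hn1]; ring
      rw [this]
      have : (1 : ℝ) ≤ D := by exact_mod_cast hD1
      linarith
    · obtain ⟨u0, hu0⟩ := hB
      simp only [hB_def, Finset.mem_filter] at hu0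
      obtain ⟨-, hu0ne, hu0odd⟩ := hu0
      obtain ⟨hw1, -, -⟩ := h w u0 (Ne.symm hu0ne) hu0odd
      -- unique neighbor of w
      obtain ⟨⟨c0, hc0⟩, huniq⟩ := Nat.card_eq_one_iff_exists.mp hw1
      set L : Finset V := Finset.univ.filter (fun u => T.Adj c0 u ∧ degree' T u = 1) with hL_def
      have hwL : w ∈ L := by
        simp only [hL_def, Finset.mem_filter]
        exact ⟨Finset.mem_univ w, hc0.symm, hw1⟩
      have hBL : B w ⊆ L := by
        intro u hu
        simp only [hB_def, Finset.mem_filter] at hu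
        obtain ⟨-, hune, huodd⟩ := hu
        obtain ⟨-, hu1, c, hwc, huc⟩ := h w u (Ne.symm hune) huodd
        have : (⟨c, hwc⟩ : {x : V // T.Adj w x}) = ⟨c0, hc0⟩ := huniq _
        have hcc0 : c = c0 := congrArg Subtype.val this
        simp only [hL_def, Finset.mem_filter]
        exact ⟨Finset.mem_univ u, hcc0 ▸ huc.symm, hu1⟩
      have hwB : w ∉ B w := by
        simp [hB_def]
      have hins : insert w (B w) ⊆ L := by
        intro u hu
        rcases Finset.mem_insert.mp hu with rfl | hu
        · exact hwL
        · exact hBL hu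
      have hcard1 : (B w).card + 1 ≤ L.card := by
        have hc := Finset.card_le_card hins
        rw [Finset.card_insert_of_notMem hwB] at hc
        omega
      have hLD : L.card ≤ D := by
        have : Nat.card {u : V // T.Adj c0 u ∧ degree' T u = 1} = L.card := by
          rw [Nat.card_eq_fintype_card, Fintype.card_subtype]
        have hle : Nat.card {u : V // T.Adj c0 u ∧ degree' T u = 1} ≤ maxLeafCount T :=
          Finset.le_sup (f := fun w => Nat.card {u : V // T.Adj w u ∧ degree' T u = 1})
            (Finset.mem_univ c0)
        rw [this] at hle
        exact hle
      have hABw := hAB w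
      have h' : (A w).card + (B w).card + 1 = n := by omega
      have hABR : ((A w).card : ℝ) + (B w).card = (n : ℝ) - 1 := by
        have hcast := congrArg (Nat.cast (R := ℝ)) h'
        push_cast at hcast
        linarith
      have hBD : ((B w).card : ℝ) + 1 ≤ (D : ℝ) := by
        exact_mod_cast hcard1.trans hLD
      linarith
  constructor
  · intro w
    rw [hcardA w]
    exact key w
  · set S : Finset (Finset V) := Finset.univ.filter (IsOddSet T) with hS_def
    have hnum : numOddSets T = S.card := by
      rw [numOddSets, Nat.card_eq_fintype_card, Fintype.card_subtype]
    have hfiber : ∀ w : V, (S.filter (fun X => w ∈ X)).card = (A w).card := by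
      intro w
      refine (Finset.card_bij (fun u _ => ({w, u} : Finset V)) ?_ ?_ ?_).symm
      · intro u hu
        simp only [hA_def, Finset.mem_filter] at hu
        simp only [hS_def, Finset.mem_filter]
        exact ⟨⟨Finset.mem_univ _, hu.2.2⟩, Finset.mem_insert_self w _⟩
      · intro a ha b hb hab
        simp only [hA_def, Finset.mem_filter] at ha hb
        have hab' : ({w, a} : Finset V) = {w, b} := hab
        have : a ∈ ({w, b} : Finset V) := by
          rw [← hab']; exact Finset.mem_insert_of_mem (Finset.mem_singleton_self a)
        rcases Finset.mem_insert.mp this with h1 | h1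
        · exact absurd h1 ha.2.1
        · exact Finset.mem_singleton.mp h1
      · intro X hX
        simp only [hS_def, Finset.mem_filter] at hX
        obtain ⟨⟨-, hXodd⟩, hwX⟩ := hX
        obtain ⟨a, b, hab, rfl⟩ := Finset.card_eq_two.mp hXodd.1
        rcases Finset.mem_insert.mp hwX with rfl | hwb
        · refine ⟨b, ?_, rfl⟩
          simp only [hA_def, Finset.mem_filter]
          exact ⟨Finset.mem_univ b, Ne.symm hab, hXodd⟩
        · have hwb' : w = b := Finset.mem_singleton.mp hwb
          subst hwb'
          refine ⟨a, ?_, Finset.pair_comm w a⟩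
          simp only [hA_def, Finset.mem_filter]
          rw [Finset.pair_comm w a]
          exact ⟨Finset.mem_univ a, hab, hXodd⟩
    have hdouble : ∑ w : V, (A w).card = 2 * S.card := by
      have h1 : ∀ X ∈ S, X.card = 2 := fun X hX => ((Finset.mem_filter.mp hX).2).1
      calc ∑ w : V, (A w).card = ∑ w : V, (S.filter (fun X => w ∈ X)).card := by
            simp_rw [hfiber]
        _ = ∑ w : V, ∑ X ∈ S, if w ∈ X then 1 else 0 := by
            simp_rw [Finset.card_filter]
        _ = ∑ X ∈ S, ∑ w : V, if w ∈ X then 1 else 0 := Finset.sum_comm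
        _ = ∑ X ∈ S, X.card := by
            refine Finset.sum_congr rfl fun X _ => ?_
            rw [← Finset.card_filter]
            congr 1
            exact Finset.filter_univ_mem X
        _ = ∑ X ∈ S, 2 := Finset.sum_congr rfl h1
        _ = 2 * S.card := by rw [Finset.sum_const, smul_eq_mul, mul_comm]
    rw [hnum]
    have hsum : (n : ℝ) * ((n : ℝ) - D) ≤ ∑ w : V, ((A w).card : ℝ) := by
      calc (n : ℝ) * ((n : ℝ) - D) = ∑ _w : V, ((n : ℝ) - D) := by
            rw [Finset.sum_const, Finset.card_univ, nsmul_eq_mul, hn_def]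
        _ ≤ ∑ w : V, ((A w).card : ℝ) := Finset.sum_le_sum fun w _ => key w
    have hcast : (∑ w : V, ((A w).card : ℝ)) = 2 * (S.card : ℝ) := by
      rw [← Nat.cast_sum, hdouble]
      push_cast
      ring
    linarith
end
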